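/- arXiv:1511.00452 — 3 statements merged into one kernel-verified Lean document; each statement's English description precedes it below -/
import Mathlib

section
/- Consider q̄ drawn uniformly at random from P(M)^W (each woman's preference list independently uniform over all preference lists over M). Fix three distinct men a, b, c. For every ε > 0 there exists N such that for every finite set of men M containing a, b, c with |M| ≥ 3 and every finite set of women W with |W| ≥ N, the probability that there exists a q̄-stable one-side-querying matching mechanism that is OSP for all three of a, b, and c is less than ε. -/
/-- A preference list over `α` (a totally ordered subset of `α`), represented as a
duplicate-free list, most-preferred member first. Members of `α` not on the list
are unranked (unacceptable). -/
abbrev PrefList (α : Type) : Type := {l : List α // l.Nodup}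

/-- `x ≻ y` according to `p`: `x` is ranked above `y` on `p`, or `x` appears on `p`
while `y` does not. -/
def prefers {α : Type} (p : PrefList α) (x y : α) : Prop :=
  [x, y].Sublist p.val ∨ (x ∈ p.val ∧ y ∉ p.val)

/-- Strict preference over possible outcomes, where `none` means being unmatched:
being matched to someone on one's list is better than being unmatched, which is
better than being matched to someone not on one's list. -/
def outPrefers {α : Type} (p : PrefList α) : Option α → Option α → Prop
  | some x, some y => prefers p x y
  | some x, none => x ∈ p.val
  | none, some y => y ∉ p.val
  | none, none => False

/-- A preference list is full if it ranks every member of the opposite side. -/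
def IsFull {α : Type} (p : PrefList α) : Prop := ∀ x : α, x ∈ p.val

/-- A matching between `M` and `W`: a one-to-one mapping between a subset of `M`
and a subset of `W`, recorded as a partial injective function from men to women
(`μ.toFun m = none` meaning that `m` is unmatched). -/
structure Matching (M W : Type) where
  toFun : M → Option W
  inj : ∀ ⦃m m' : M⦄ ⦃w : W⦄, toFun m = some w → toFun m' = some w → m = m'

/-- Woman `w` strictly prefers man `m` (according to her list `q`) over the partner
matched to her by `μ` (or over remaining unmatched, if `μ` leaves her unmatched). -/
def womanPrefersOver {M W : Type} (q : PrefList M) (μ : Matching M W) (w : W) (m : M) : Prop :=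
  (∃ m', μ.toFun m' = some w ∧ prefers q m m') ∨
    ((∀ m', μ.toFun m' ≠ some w) ∧ m ∈ q.val)

/-- `μ` is stable with respect to men's profile `pbar` and women's profile `qbar`:
there is no man and woman each preferring the other over their match under `μ`, and
no participant is matched with a partner not on their preference list. -/
def IsStable {M W : Type} (pbar : M → PrefList W) (qbar : W → PrefList M)
    (μ : Matching M W) : Prop :=
  ¬ ((∃ m w, outPrefers (pbar m) (some w) (μ.toFun m) ∧ womanPrefersOver (qbar w) μ w m) ∨
     (∃ m w, μ.toFun m = some w ∧ (w ∉ (pbar m).val ∨ m ∉ (qbar w).val)))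

/-- `C` is `qbar`-stable: `C pbar` is stable with respect to `pbar` and `qbar` for
every men's profile `pbar`. -/
def IsStableRule {M W : Type} (qbar : W → PrefList M)
    (C : (M → PrefList W) → Matching M W) : Prop :=
  ∀ pbar, IsStable pbar qbar (C pbar)

/-- `C` is the `M`-optimal stable matching rule `C^qbar`: it maps each men's profile
`pbar` to a stable matching that every man weakly prefers to every stable matching. -/
def IsMOptimalStableRule {M W : Type} (qbar : W → PrefList M)
    (C : (M → PrefList W) → Matching M W) : Prop :=
  ∀ pbar, IsStable pbar qbar (C pbar) ∧
    ∀ μ, IsStable pbar qbar μ → ∀ m, ¬ outPrefers (pbar m) (μ.toFun m) ((C pbar).toFun m)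

/-- `C` is strategy-proof for man `m`. -/
def StrategyProofFor {M W : Type} [DecidableEq M]
    (C : (M → PrefList W) → Matching M W) (m : M) : Prop :=
  ∀ (pbar : M → PrefList W) (p' : PrefList W),
    ¬ outPrefers (pbar m) ((C (Function.update pbar m p')).toFun m) ((C pbar).toFun m)

/-- A women's profile `qbar` is cyclical if there are men `a`, `b`, `c` and women
`x`, `y` with `a ≻ₓ b ≻ₓ c ≻_y a`. -/
def Cyclical {M W : Type} (qbar : W → PrefList M) : Prop :=
  ∃ (a b c : M) (x y : W),
    prefers (qbar x) a b ∧ prefers (qbar x) b c ∧ prefers (qbar y) c a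

/-- A one-side-querying extensive-form matching mechanism for `M` over `W`: a rooted
tree each of whose leaves is labeled by a matching and each of whose internal nodes
queries a man; the edges out of an internal node querying `q` are the fibers of the
function `next` (two preference lists for `q` lie on the same outgoing edge iff they
are routed to the same subtree). -/
inductive Mech (M W : Type) : Type
  | leaf (μ : Matching M W)
  | node (q : M) (next : PrefList W → Mech M W)

/-- The matching rule implemented by a mechanism: route the profile from the root to
a leaf and output that leaf's matching. -/
def Mech.run {M W : Type} : Mech M W → (M → PrefList W) → Matching M W
  | .leaf μ, _ => μ
  | .node q next, pbar => (next (pbar q)).run pbar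

/-- Auxiliary definition of obvious strategy-proofness for man `m`: `P` is the set of
profiles passing through the current node. At each node querying `m`, for all profiles
`pbar`, `pbar'` passing through the node at which `m`'s lists diverge (are routed to
distinct subtrees), the outcome of `pbar'` is not strictly preferred (according to
`pbar m`) to the outcome of `pbar`. -/
def Mech.OSPAux {M W : Type} (m : M) : Mech M W → Set (M → PrefList W) → Prop
  | .leaf _, _ => True
  | .node q next, P =>
      (q = m → ∀ pbar ∈ P, ∀ pbar' ∈ P, next (pbar m) ≠ next (pbar' m) →
        ¬ outPrefers (pbar m) (((next (pbar' m)).run pbar').toFun m)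
            (((next (pbar m)).run pbar).toFun m)) ∧
      ∀ p : PrefList W, Mech.OSPAux m (next p) {pbar ∈ P | next (pbar q) = next p}

/-- `I` is obviously strategy-proof (OSP) for man `m`. -/
def Mech.OSPFor {M W : Type} (I : Mech M W) (m : M) : Prop :=
  Mech.OSPAux m I Set.univ

/-- A matching rule is OSP-implementable if it is implemented by some mechanism that
is OSP for every man. -/
def OSPImplementable {M W : Type} (C : (M → PrefList W) → Matching M W) : Prop :=
  ∃ I : Mech M W, (∀ m : M, I.OSPFor m) ∧ ∀ pbar, I.run pbar = C pbar

/-- A two-sides-querying extensive-form matching mechanism: internal nodes may query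
either a man (about his preference list over `W`) or a woman (about her preference
list over `M`). -/
inductive Mech2 (M W : Type) : Type
  | leaf (μ : Matching M W)
  | nodeM (q : M) (next : PrefList W → Mech2 M W)
  | nodeW (q : W) (next : PrefList M → Mech2 M W)

/-- The two-sides-querying matching rule implemented by a two-sides-querying mechanism. -/
def Mech2.run {M W : Type} :
    Mech2 M W → (M → PrefList W) → (W → PrefList M) → Matching M W
  | .leaf μ, _, _ => μ
  | .nodeM q next, pbar, qbar => (next (pbar q)).run pbar qbar
  | .nodeW q next, pbar, qbar => (next (qbar q)).run pbar qbar

/-- Auxiliary definition of obvious strategy-proofness of a two-sides-querying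
mechanism for man `m`; `P` is the set of two-sided profiles passing through the
current node. -/
def Mech2.OSPAux {M W : Type} (m : M) :
    Mech2 M W → Set ((M → PrefList W) × (W → PrefList M)) → Prop
  | .leaf _, _ => True
  | .nodeM q next, P =>
      (q = m → ∀ r ∈ P, ∀ r' ∈ P, next (r.1 m) ≠ next (r'.1 m) →
        ¬ outPrefers (r.1 m) (((next (r'.1 m)).run r'.1 r'.2).toFun m)
            (((next (r.1 m)).run r.1 r.2).toFun m)) ∧
      ∀ p : PrefList W, Mech2.OSPAux m (next p) {r ∈ P | next (r.1 q) = next p}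
  | .nodeW q next, P =>
      ∀ p : PrefList M, Mech2.OSPAux m (next p) {r ∈ P | next (r.2 q) = next p}

/-- A two-sides-querying mechanism `I` is obviously strategy-proof (OSP) for man `m`. -/
def Mech2.OSPForM {M W : Type} (I : Mech2 M W) (m : M) : Prop :=
  Mech2.OSPAux m I Set.univ

section Impossibility

variable {M W : Type}

lemma IsStable.no_block {pbar : M → PrefList W} {qbar : W → PrefList M} {μ : Matching M W}
    (h : IsStable pbar qbar μ) {m : M} {w : W}
    (h1 : outPrefers (pbar m) (some w) (μ.toFun m))
    (h2 : womanPrefersOver (qbar w) μ w m) : False :=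
  h (Or.inl ⟨m, w, h1, h2⟩)

lemma IsStable.mem_of_matched {pbar : M → PrefList W} {qbar : W → PrefList M} {μ : Matching M W}
    (h : IsStable pbar qbar μ) {m : M} {w : W}
    (hm : μ.toFun m = some w) : w ∈ (pbar m).val := by
  by_contra hc
  exact h (Or.inr ⟨m, w, hm, Or.inl hc⟩)

lemma claim_block {pbar : M → PrefList W} {qbar : W → PrefList M} {μ : Matching M W}
    (h : IsStable pbar qbar μ) {m : M} {w : W}
    (hout : outPrefers (pbar m) (some w) (μ.toFun m))
    (hhold : ∀ m', μ.toFun m' = some w → prefers (qbar w) m m')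
    (hmem : m ∈ (qbar w).val) : False := by
  apply h.no_block hout
  by_cases hh : ∃ m', μ.toFun m' = some w
  · obtain ⟨m', hm'⟩ := hh
    exact Or.inl ⟨m', hm', hhold m' hm'⟩
  · push_neg at hh
    exact Or.inr ⟨hh, hmem⟩

/-- singleton preference list -/
def Lsing (w : W) : PrefList W := ⟨[w], by simp⟩

/-- two-element preference list -/
def Lpair (w w' : W) (h : w ≠ w') : PrefList W := ⟨[w, w'], by simp [h]⟩

/-- empty preference list -/
def Lnil : PrefList W := ⟨[], List.nodup_nil⟩

open Classical in
/-- the profile where `a`, `b`, `c` submit `pa`, `pb`, `pc` and everyone else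
submits the empty list -/
noncomputable def prof (a b c : M) (pa pb pc : PrefList W) : M → PrefList W :=
  fun m => if m = a then pa else if m = b then pb else if m = c then pc else Lnil

variable {a b c : M} {pa pb pc : PrefList W}

lemma prof_a : prof a b c pa pb pc a = pa := by simp [prof]

lemma prof_b (hab : a ≠ b) : prof a b c pa pb pc b = pb := by
  simp [prof, hab.symm]

lemma prof_c (hac : a ≠ c) (hbc : b ≠ c) : prof a b c pa pb pc c = pc := by
  simp [prof, hac.symm, hbc.symm]

lemma prof_other {m : M} (h1 : m ≠ a) (h2 : m ≠ b) (h3 : m ≠ c) :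
    prof a b c pa pb pc m = Lnil := by
  simp [prof, h1, h2, h3]

end Impossibility
section Uniq

variable {M W : Type} {a b c : M} {x y : W}
variable (hab : a ≠ b) (hac : a ≠ c) (hbc : b ≠ c) (hxy : x ≠ y)
variable {qbar : W → PrefList M}
variable (hqx : [a, b, c].Sublist (qbar x).val) (hqy : [c, b, a].Sublist (qbar y).val)

section Facts
include hqx in
lemma pref_x_ab : prefers (qbar x) a b :=
  Or.inl ((List.Sublist.cons₂ _ (List.Sublist.cons₂ _ (List.nil_sublist _))).trans hqx)
include hqx in
lemma pref_x_ac : prefers (qbar x) a c :=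
  Or.inl ((List.Sublist.cons₂ _ (List.Sublist.cons _ (List.Sublist.refl _))).trans hqx)
include hqx in
lemma pref_x_bc : prefers (qbar x) b c :=
  Or.inl ((List.Sublist.cons _ (List.Sublist.refl _)).trans hqx)
include hqy in
lemma pref_y_cb : prefers (qbar y) c b :=
  Or.inl ((List.Sublist.cons₂ _ (List.Sublist.cons₂ _ (List.nil_sublist _))).trans hqy)
include hqy in
lemma pref_y_ca : prefers (qbar y) c a :=
  Or.inl ((List.Sublist.cons₂ _ (List.Sublist.cons _ (List.Sublist.refl _))).trans hqy)
include hqy in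
lemma pref_y_ba : prefers (qbar y) b a :=
  Or.inl ((List.Sublist.cons _ (List.Sublist.refl _)).trans hqy)
end Facts

include hab hac hbc hxy hqx hqy in
/-- profile ([y,x],[x],[x]) : a is matched with y -/
lemma uniq211 {μ : Matching M W}
    (h : IsStable (prof a b c (Lpair y x hxy.symm) (Lsing x) (Lsing x)) qbar μ) :
    μ.toFun a = some y := by
  by_contra hne
  apply claim_block h (m := a) (w := y) ?_ ?_ ?_
  · rw [prof_a]
    cases hval : μ.toFun a with
    | none => simp [outPrefers, Lpair]
    | some w =>
      have hw := h.mem_of_matched hval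
      rw [prof_a] at hw
      simp [Lpair] at hw
      rcases hw with hw | hw
      · rw [hw] at hval; exact absurd hval hne
      · rw [hw]; exact Or.inl (List.Sublist.refl _)
  · intro m' hm'
    exfalso
    have hw := h.mem_of_matched hm'
    by_cases h1 : m' = a
    · subst h1; exact hne hm'
    by_cases h2 : m' = b
    · subst h2; rw [prof_b hab] at hw; simp [Lsing] at hw; exact hxy hw.symm
    by_cases h3 : m' = c
    · subst h3; rw [prof_c hac hbc] at hw; simp [Lsing] at hw; exact hxy hw.symm
    · rw [prof_other h1 h2 h3] at hw; simp [Lnil] at hw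
  · exact hqy.subset (by simp)

include hab hac hbc hxy hqx hqy in
/-- profile ([y],[x],[x]) : a-y, b-x -/
lemma uniq111 {μ : Matching M W}
    (h : IsStable (prof a b c (Lsing y) (Lsing x) (Lsing x)) qbar μ) :
    μ.toFun a = some y ∧ μ.toFun b = some x := by
  constructor
  · by_contra hne
    apply claim_block h (m := a) (w := y) ?_ ?_ ?_
    · rw [prof_a]
      cases hval : μ.toFun a with
      | none => simp [outPrefers, Lsing]
      | some w =>
        have hw := h.mem_of_matched hval
        rw [prof_a] at hw
        simp [Lsing] at hw
        rw [hw] at hval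
        exact absurd hval hne
    · intro m' hm'
      exfalso
      have hw := h.mem_of_matched hm'
      by_cases h1 : m' = a
      · subst h1; exact hne hm'
      by_cases h2 : m' = b
      · subst h2; rw [prof_b hab] at hw; simp [Lsing] at hw; exact hxy hw.symm
      by_cases h3 : m' = c
      · subst h3; rw [prof_c hac hbc] at hw; simp [Lsing] at hw; exact hxy hw.symm
      · rw [prof_other h1 h2 h3] at hw; simp [Lnil] at hw
    · exact hqy.subset (by simp)
  · by_contra hne
    apply claim_block h (m := b) (w := x) ?_ ?_ ?_
    · rw [prof_b hab]
      cases hval : μ.toFun b with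
      | none => simp [outPrefers, Lsing]
      | some w =>
        have hw := h.mem_of_matched hval
        rw [prof_b hab] at hw
        simp [Lsing] at hw
        rw [hw] at hval
        exact absurd hval hne
    · intro m' hm'
      have hw := h.mem_of_matched hm'
      by_cases h1 : m' = a
      · exfalso; subst h1; rw [prof_a] at hw; simp [Lsing] at hw; exact hxy hw
      by_cases h2 : m' = b
      · exact absurd (h2 ▸ hm') hne
      by_cases h3 : m' = c
      · subst h3; exact pref_x_bc hqx
      · exfalso; rw [prof_other h1 h2 h3] at hw; simp [Lnil] at hw
    · exact hqx.subset (by simp)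

include hab hac hbc hxy hqx hqy in
/-- profile ([y],[x],[x,y]) : a unmatched, c-y -/
lemma uniq112 {μ : Matching M W}
    (h : IsStable (prof a b c (Lsing y) (Lsing x) (Lpair x y hxy)) qbar μ) :
    μ.toFun a = none ∧ μ.toFun c = some y := by
  have hb : μ.toFun b = some x := by
    by_contra hne
    apply claim_block h (m := b) (w := x) ?_ ?_ ?_
    · rw [prof_b hab]
      cases hval : μ.toFun b with
      | none => simp [outPrefers, Lsing]
      | some w =>
        have hw := h.mem_of_matched hval
        rw [prof_b hab] at hw
        simp [Lsing] at hw
        rw [hw] at hval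
        exact absurd hval hne
    · intro m' hm'
      have hw := h.mem_of_matched hm'
      by_cases h1 : m' = a
      · exfalso; subst h1; rw [prof_a] at hw; simp [Lsing] at hw; exact hxy hw
      by_cases h2 : m' = b
      · exact absurd (h2 ▸ hm') hne
      by_cases h3 : m' = c
      · subst h3; exact pref_x_bc hqx
      · exfalso; rw [prof_other h1 h2 h3] at hw; simp [Lnil] at hw
    · exact hqx.subset (by simp)
  have hc : μ.toFun c = some y := by
    by_contra hnec
    apply claim_block h (m := c) (w := y) ?_ ?_ ?_
    · rw [prof_c hac hbc]
      cases hval : μ.toFun c with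
      | none => simp [outPrefers, Lpair]
      | some w =>
        have hw := h.mem_of_matched hval
        rw [prof_c hac hbc] at hw
        simp [Lpair] at hw
        rcases hw with hw | hw
        · rw [hw] at hval; exact absurd (μ.inj hval hb) (fun hh => hbc hh.symm)
        · rw [hw] at hval; exact absurd hval hnec
    · intro m' hm'
      have hw := h.mem_of_matched hm'
      by_cases h1 : m' = a
      · subst h1; exact pref_y_ca hqy
      by_cases h2 : m' = b
      · exfalso; subst h2; rw [hb] at hm'; exact hxy (Option.some.inj hm')
      by_cases h3 : m' = c
      · exact absurd (h3 ▸ hm') hnec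
      · exfalso; rw [prof_other h1 h2 h3] at hw; simp [Lnil] at hw
    · exact hqy.subset (by simp)
  refine ⟨?_, hc⟩
  cases hval : μ.toFun a with
  | none => rfl
  | some w =>
    exfalso
    have hw := h.mem_of_matched hval
    rw [prof_a] at hw
    simp [Lsing] at hw
    rw [hw] at hval
    exact hac (μ.inj hval hc)

include hab hac hbc hxy hqx hqy in
/-- profile ([y],[y,x],[x]) : c-x -/
lemma uniq121 {μ : Matching M W}
    (h : IsStable (prof a b c (Lsing y) (Lpair y x hxy.symm) (Lsing x)) qbar μ) :
    μ.toFun c = some x := by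
  have hby : μ.toFun b = some y := by
    by_contra hne
    apply claim_block h (m := b) (w := y) ?_ ?_ ?_
    · rw [prof_b hab]
      cases hval : μ.toFun b with
      | none => simp [outPrefers, Lpair]
      | some w =>
        have hw := h.mem_of_matched hval
        rw [prof_b hab] at hw
        simp [Lpair] at hw
        rcases hw with hw | hw
        · rw [hw] at hval; exact absurd hval hne
        · rw [hw]; exact Or.inl (List.Sublist.refl _)
    · intro m' hm'
      have hw := h.mem_of_matched hm'
      by_cases h1 : m' = a
      · subst h1; exact pref_y_ba hqy
      by_cases h2 : m' = b
      · exact absurd (h2 ▸ hm') hne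
      by_cases h3 : m' = c
      · exfalso; subst h3; rw [prof_c hac hbc] at hw; simp [Lsing] at hw; exact hxy hw.symm
      · exfalso; rw [prof_other h1 h2 h3] at hw; simp [Lnil] at hw
    · exact hqy.subset (by simp)
  by_contra hnec
  apply claim_block h (m := c) (w := x) ?_ ?_ ?_
  · rw [prof_c hac hbc]
    cases hval : μ.toFun c with
    | none => simp [outPrefers, Lsing]
    | some w =>
      have hw := h.mem_of_matched hval
      rw [prof_c hac hbc] at hw
      simp [Lsing] at hw
      rw [hw] at hval
      exact absurd hval hnec
  · intro m' hm'
    exfalso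
    have hw := h.mem_of_matched hm'
    by_cases h1 : m' = a
    · subst h1; rw [prof_a] at hw; simp [Lsing] at hw; exact hxy hw
    by_cases h2 : m' = b
    · subst h2; rw [hby] at hm'; exact hxy (Option.some.inj hm').symm
    by_cases h3 : m' = c
    · exact hnec (h3 ▸ hm')
    · rw [prof_other h1 h2 h3] at hw; simp [Lnil] at hw
  · exact hqx.subset (by simp)

include hab hac hbc hxy hqx hqy in
/-- profile ([y,x],[y,x],[x]) : a-x -/
lemma uniq221 {μ : Matching M W}
    (h : IsStable (prof a b c (Lpair y x hxy.symm) (Lpair y x hxy.symm) (Lsing x)) qbar μ) :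
    μ.toFun a = some x := by
  by_contra hnea
  cases hval : μ.toFun a with
  | none =>
    apply claim_block h (m := a) (w := x) ?_ ?_ ?_
    · rw [prof_a, hval]; simp [outPrefers, Lpair]
    · intro m' hm'
      have hw := h.mem_of_matched hm'
      by_cases h1 : m' = a
      · exfalso; subst h1; rw [hval] at hm'; exact nomatch hm'
      by_cases h2 : m' = b
      · subst h2; exact pref_x_ab hqx
      by_cases h3 : m' = c
      · subst h3; exact pref_x_ac hqx
      · exfalso; rw [prof_other h1 h2 h3] at hw; simp [Lnil] at hw
    · exact hqx.subset (by simp)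
  | some w =>
    have hw := h.mem_of_matched hval
    rw [prof_a] at hw
    simp [Lpair] at hw
    rcases hw with hw | hw
    · rw [hw] at hval
      apply claim_block h (m := b) (w := y) ?_ ?_ ?_
      · rw [prof_b hab]
        cases hvb : μ.toFun b with
        | none => simp [outPrefers, Lpair]
        | some w' =>
          have hw' := h.mem_of_matched hvb
          rw [prof_b hab] at hw'
          simp [Lpair] at hw'
          rcases hw' with hw' | hw'
          · rw [hw'] at hvb; exact absurd (μ.inj hvb hval) (Ne.symm hab)
          · rw [hw']; exact Or.inl (List.Sublist.refl _)
      · intro m' hm'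
        have hw' := h.mem_of_matched hm'
        by_cases h1 : m' = a
        · subst h1; exact pref_y_ba hqy
        by_cases h2 : m' = b
        · exfalso; subst h2; exact (Ne.symm hab) (μ.inj hm' hval)
        by_cases h3 : m' = c
        · exfalso; subst h3; rw [prof_c hac hbc] at hw'; simp [Lsing] at hw'; exact hxy hw'.symm
        · exfalso; rw [prof_other h1 h2 h3] at hw'; simp [Lnil] at hw'
      · exact hqy.subset (by simp)
    · rw [hw] at hval; exact hnea hval

include hab hac hbc hxy hqx hqy in
/-- profile ([y,x],[y,x],[x,y]) : b unmatched -/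
lemma uniq222 {μ : Matching M W}
    (h : IsStable (prof a b c (Lpair y x hxy.symm) (Lpair y x hxy.symm) (Lpair x y hxy)) qbar μ) :
    μ.toFun b = none := by
  have hax : μ.toFun a = some x := by
    cases hval : μ.toFun a with
    | none =>
      exfalso
      apply claim_block h (m := a) (w := x) ?_ ?_ ?_
      · rw [prof_a, hval]; simp [outPrefers, Lpair]
      · intro m' hm'
        have hw := h.mem_of_matched hm'
        by_cases h1 : m' = a
        · exfalso; subst h1; rw [hval] at hm'; exact nomatch hm'
        by_cases h2 : m' = b
        · subst h2; exact pref_x_ab hqx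
        by_cases h3 : m' = c
        · subst h3; exact pref_x_ac hqx
        · exfalso; rw [prof_other h1 h2 h3] at hw; simp [Lnil] at hw
      · exact hqx.subset (by simp)
    | some w =>
      have hw := h.mem_of_matched hval
      rw [prof_a] at hw
      simp [Lpair] at hw
      rcases hw with hw | hw
      · rw [hw] at hval
        exfalso
        apply claim_block h (m := b) (w := y) ?_ ?_ ?_
        · rw [prof_b hab]
          cases hvb : μ.toFun b with
          | none => simp [outPrefers, Lpair]
          | some w' =>
            have hw' := h.mem_of_matched hvb
            rw [prof_b hab] at hw'
            simp [Lpair] at hw'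
            rcases hw' with rfl | rfl
            · exact absurd (μ.inj hvb hval) (Ne.symm hab)
            · exact Or.inl (List.Sublist.refl _)
        · intro m' hm'
          have hw' := h.mem_of_matched hm'
          by_cases h1 : m' = a
          · subst h1; exact pref_y_ba hqy
          by_cases h2 : m' = b
          · exfalso; subst h2; exact (Ne.symm hab) (μ.inj hm' hval)
          by_cases h3 : m' = c
          · exfalso; subst h3; exact (Ne.symm hac) (μ.inj hm' hval)
          · exfalso; rw [prof_other h1 h2 h3] at hw'; simp [Lnil] at hw'
        · exact hqy.subset (by simp)
      · exact congrArg some hw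
  have hcy : μ.toFun c = some y := by
    by_contra hnec
    apply claim_block h (m := c) (w := y) ?_ ?_ ?_
    · rw [prof_c hac hbc]
      cases hval : μ.toFun c with
      | none => simp [outPrefers, Lpair]
      | some w =>
        have hw := h.mem_of_matched hval
        rw [prof_c hac hbc] at hw
        simp [Lpair] at hw
        rcases hw with hw | hw
        · rw [hw] at hval; exact absurd (μ.inj hval hax) (Ne.symm hac)
        · rw [hw] at hval; exact absurd hval hnec
    · intro m' hm'
      have hw := h.mem_of_matched hm'
      by_cases h1 : m' = a
      · exfalso; subst h1; rw [hax] at hm'; exact hxy (Option.some.inj hm')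
      by_cases h2 : m' = b
      · subst h2; exact pref_y_cb hqy
      by_cases h3 : m' = c
      · exact absurd (h3 ▸ hm') hnec
      · exfalso; rw [prof_other h1 h2 h3] at hw; simp [Lnil] at hw
    · exact hqy.subset (by simp)
  cases hvb : μ.toFun b with
  | none => rfl
  | some w =>
    exfalso
    have hw := h.mem_of_matched hvb
    rw [prof_b hab] at hw
    simp [Lpair] at hw
    rcases hw with hw | hw
    · rw [hw] at hvb; exact hbc (μ.inj hvb hcy)
    · rw [hw] at hvb; exact hab (μ.inj hvb hax).symm


end Uniq
section Descent

variable {M W : Type} {a b c : M} {x y : W}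
variable (hab : a ≠ b) (hac : a ≠ c) (hbc : b ≠ c) (hxy : x ≠ y)
variable {qbar : W → PrefList M}
variable (hqx : [a, b, c].Sublist (qbar x).val) (hqy : [c, b, a].Sublist (qbar y).val)

include hab hac hbc hxy hqx hqy in
lemma descent (I : Mech M W) :
    ∀ P : Set (M → PrefList W),
    (∀ pbar ∈ P, IsStable pbar qbar (I.run pbar)) →
    Mech.OSPAux a I P → Mech.OSPAux b I P → Mech.OSPAux c I P →
    prof a b c (Lsing y) (Lsing x) (Lsing x) ∈ P →
    prof a b c (Lsing y) (Lsing x) (Lpair x y hxy) ∈ P →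
    prof a b c (Lsing y) (Lpair y x hxy.symm) (Lsing x) ∈ P →
    prof a b c (Lpair y x hxy.symm) (Lsing x) (Lsing x) ∈ P →
    prof a b c (Lpair y x hxy.symm) (Lpair y x hxy.symm) (Lsing x) ∈ P →
    prof a b c (Lpair y x hxy.symm) (Lpair y x hxy.symm) (Lpair x y hxy) ∈ P →
    False := by
  induction I with
  | leaf μ =>
    intro P hst _ _ _ h111 _ _ _ h221 _
    have e1 : μ.toFun a = some y := (uniq111 hab hac hbc hxy hqx hqy (hst _ h111)).1
    have e2 : μ.toFun a = some x := uniq221 hab hac hbc hxy hqx hqy (hst _ h221)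
    rw [e1] at e2
    exact hxy (Option.some.inj e2).symm
  | node q next ih =>
    intro P hst hOa hOb hOc h111 h112 h121 h211 h221 h222
    by_cases hqa : q = a
    · obtain ⟨hOa1, hOa2⟩ := hOa
      obtain ⟨_, hOb2⟩ := hOb
      obtain ⟨_, hOc2⟩ := hOc
      by_cases hsp : next (Lsing y) = next (Lpair y x hxy.symm)
      · refine ih (Lsing y) {pbar ∈ P | next (pbar q) = next (Lsing y)} ?_
          (hOa2 (Lsing y)) (hOb2 (Lsing y)) (hOc2 (Lsing y))
          ⟨h111, by rw [hqa, prof_a]⟩ ⟨h112, by rw [hqa, prof_a]⟩ ⟨h121, by rw [hqa, prof_a]⟩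
          ⟨h211, by rw [hqa, prof_a]; exact hsp.symm⟩
          ⟨h221, by rw [hqa, prof_a]; exact hsp.symm⟩
          ⟨h222, by rw [hqa, prof_a]; exact hsp.symm⟩
        intro pbar hp
        obtain ⟨hP, he⟩ := hp
        have hs := hst pbar hP
        simp only [Mech.run] at hs
        rwa [he] at hs
      · apply hOa1 hqa _ h112 _ h211 ?_ ?_
        · rw [prof_a, prof_a]; exact hsp
        · have r112 : ((next ((prof a b c (Lsing y) (Lsing x) (Lpair x y hxy)) a)).run
              (prof a b c (Lsing y) (Lsing x) (Lpair x y hxy))).toFun a = none := by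
            have hs := hst _ h112
            simp only [Mech.run] at hs
            rw [hqa] at hs
            exact (uniq112 hab hac hbc hxy hqx hqy hs).1
          have r211 : ((next ((prof a b c (Lpair y x hxy.symm) (Lsing x) (Lsing x)) a)).run
              (prof a b c (Lpair y x hxy.symm) (Lsing x) (Lsing x))).toFun a = some y := by
            have hs := hst _ h211
            simp only [Mech.run] at hs
            rw [hqa] at hs
            exact uniq211 hab hac hbc hxy hqx hqy hs
          rw [r112, r211, prof_a]
          simp [outPrefers, Lsing]
    · by_cases hqb : q = b
      · obtain ⟨hOb1, hOb2⟩ := hOb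
        obtain ⟨_, hOa2⟩ := hOa
        obtain ⟨_, hOc2⟩ := hOc
        by_cases hsp : next (Lsing x) = next (Lpair y x hxy.symm)
        · refine ih (Lsing x) {pbar ∈ P | next (pbar q) = next (Lsing x)} ?_
            (hOa2 (Lsing x)) (hOb2 (Lsing x)) (hOc2 (Lsing x))
            ⟨h111, by rw [hqb, prof_b hab]⟩ ⟨h112, by rw [hqb, prof_b hab]⟩
            ⟨h121, by rw [hqb, prof_b hab]; exact hsp.symm⟩
            ⟨h211, by rw [hqb, prof_b hab]⟩
            ⟨h221, by rw [hqb, prof_b hab]; exact hsp.symm⟩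
            ⟨h222, by rw [hqb, prof_b hab]; exact hsp.symm⟩
          intro pbar hp
          obtain ⟨hP, he⟩ := hp
          have hs := hst pbar hP
          simp only [Mech.run] at hs
          rwa [he] at hs
        · apply hOb1 hqb _ h222 _ h111 ?_ ?_
          · rw [prof_b hab, prof_b hab]; exact fun h => hsp h.symm
          · have r111 : ((next ((prof a b c (Lsing y) (Lsing x) (Lsing x)) b)).run
                (prof a b c (Lsing y) (Lsing x) (Lsing x))).toFun b = some x := by
              have hs := hst _ h111
              simp only [Mech.run] at hs
              rw [hqb] at hs
              exact (uniq111 hab hac hbc hxy hqx hqy hs).2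
            have r222 : ((next ((prof a b c (Lpair y x hxy.symm) (Lpair y x hxy.symm)
                (Lpair x y hxy)) b)).run
                (prof a b c (Lpair y x hxy.symm) (Lpair y x hxy.symm)
                  (Lpair x y hxy))).toFun b = none := by
              have hs := hst _ h222
              simp only [Mech.run] at hs
              rw [hqb] at hs
              exact uniq222 hab hac hbc hxy hqx hqy hs
            rw [r111, r222, prof_b hab]
            simp [outPrefers, Lpair]
      · by_cases hqc : q = c
        · obtain ⟨hOc1, hOc2⟩ := hOc
          obtain ⟨_, hOa2⟩ := hOa
          obtain ⟨_, hOb2⟩ := hOb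
          by_cases hsp : next (Lsing x) = next (Lpair x y hxy)
          · refine ih (Lsing x) {pbar ∈ P | next (pbar q) = next (Lsing x)} ?_
              (hOa2 (Lsing x)) (hOb2 (Lsing x)) (hOc2 (Lsing x))
              ⟨h111, by rw [hqc, prof_c hac hbc]⟩
              ⟨h112, by rw [hqc, prof_c hac hbc]; exact hsp.symm⟩
              ⟨h121, by rw [hqc, prof_c hac hbc]⟩
              ⟨h211, by rw [hqc, prof_c hac hbc]⟩
              ⟨h221, by rw [hqc, prof_c hac hbc]⟩
              ⟨h222, by rw [hqc, prof_c hac hbc]; exact hsp.symm⟩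
            intro pbar hp
            obtain ⟨hP, he⟩ := hp
            have hs := hst pbar hP
            simp only [Mech.run] at hs
            rwa [he] at hs
          · apply hOc1 hqc _ h112 _ h121 ?_ ?_
            · rw [prof_c hac hbc, prof_c hac hbc]; exact fun h => hsp h.symm
            · have r121 : ((next ((prof a b c (Lsing y) (Lpair y x hxy.symm) (Lsing x)) c)).run
                  (prof a b c (Lsing y) (Lpair y x hxy.symm) (Lsing x))).toFun c = some x := by
                have hs := hst _ h121
                simp only [Mech.run] at hs
                rw [hqc] at hs
                exact uniq121 hab hac hbc hxy hqx hqy hs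
              have r112 : ((next ((prof a b c (Lsing y) (Lsing x) (Lpair x y hxy)) c)).run
                  (prof a b c (Lsing y) (Lsing x) (Lpair x y hxy))).toFun c = some y := by
                have hs := hst _ h112
                simp only [Mech.run] at hs
                rw [hqc] at hs
                exact (uniq112 hab hac hbc hxy hqx hqy hs).2
              rw [r121, r112, prof_c hac hbc]
              exact Or.inl (List.Sublist.refl _)
        · obtain ⟨_, hOa2⟩ := hOa
          obtain ⟨_, hOb2⟩ := hOb
          obtain ⟨_, hOc2⟩ := hOc
          refine ih Lnil {pbar ∈ P | next (pbar q) = next Lnil} ?_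
            (hOa2 Lnil) (hOb2 Lnil) (hOc2 Lnil)
            ⟨h111, by rw [prof_other hqa hqb hqc]⟩
            ⟨h112, by rw [prof_other hqa hqb hqc]⟩
            ⟨h121, by rw [prof_other hqa hqb hqc]⟩
            ⟨h211, by rw [prof_other hqa hqb hqc]⟩
            ⟨h221, by rw [prof_other hqa hqb hqc]⟩
            ⟨h222, by rw [prof_other hqa hqb hqc]⟩
          intro pbar hp
          obtain ⟨hP, he⟩ := hp
          have hs := hst pbar hP
          simp only [Mech.run] at hs
          rwa [he] at hs

include hab hac hbc hxy hqx hqy in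
/-- The impossibility: with a cyclical pair of women no mechanism implementing a
`qbar`-stable rule can be OSP for all of `a`, `b`, `c`. -/
lemma no_osp :
    ¬ ∃ I : Mech M W, IsStableRule qbar I.run ∧ I.OSPFor a ∧ I.OSPFor b ∧ I.OSPFor c := by
  rintro ⟨I, hst, ha, hb, hc⟩
  exact descent hab hac hbc hxy hqx hqy I Set.univ (fun p _ => hst p) ha hb hc
    trivial trivial trivial trivial trivial trivial

end Descent
section Counting

instance PrefList.finite {α : Type} [Finite α] : Finite (PrefList α) := by
  have : Fintype α := Fintype.ofFinite α
  apply Finite.of_injective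
    (fun l : PrefList α => (fun i : Fin (Fintype.card α) => l.val[(i : ℕ)]?))
  intro l1 l2 h
  apply Subtype.ext
  apply List.ext_getElem?
  intro n
  by_cases hn : n < Fintype.card α
  · exact congrFun h ⟨n, hn⟩
  · rw [List.getElem?_eq_none, List.getElem?_eq_none]
    · exact le_trans l2.2.length_le_card (by omega)
    · exact le_trans l1.2.length_le_card (by omega)

lemma sublist_asymm {α : Type} {u v : α} : ∀ {l : List α}, l.Nodup →
    [u, v].Sublist l → [v, u].Sublist l → False := by
  intro l
  induction l with
  | nil => intro _ h _; simp at h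
  | cons z t ih =>
    intro hnd h1 h2
    rw [List.nodup_cons] at hnd
    cases h1 with
    | cons _ h1' =>
      cases h2 with
      | cons _ h2' => exact ih hnd.2 h1' h2'
      | cons_cons _ h2' => exact hnd.1 (h1'.subset (by simp))
    | cons_cons _ h1' =>
      cases h2 with
      | cons _ h2' => exact hnd.1 (h2'.subset (by simp))
      | cons_cons _ h2' => exact hnd.1 (h1'.subset (by simp))

open Classical in
lemma six_patterns {α : Type} {u v w : α} (huv : u ≠ v) (huw : u ≠ w) (hvw : v ≠ w)
    {l : List α} (hnd : l.Nodup) (hu : u ∈ l) (hv : v ∈ l) (hw : w ∈ l) :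
    [u,v,w].Sublist l ∨ [u,w,v].Sublist l ∨ [v,u,w].Sublist l ∨
    [v,w,u].Sublist l ∨ [w,u,v].Sublist l ∨ [w,v,u].Sublist l := by
  have hsub : (l.filter (fun z => decide (z = u ∨ z = v ∨ z = w))).Sublist l :=
    List.filter_sublist
  have htnd : (l.filter (fun z => decide (z = u ∨ z = v ∨ z = w))).Nodup := hsub.nodup hnd
  have hmem : ∀ z, z ∈ l.filter (fun z => decide (z = u ∨ z = v ∨ z = w)) ↔
      z ∈ l ∧ (z = u ∨ z = v ∨ z = w) := by
    intro z; simp [List.mem_filter]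
  have hlen3 : (l.filter (fun z => decide (z = u ∨ z = v ∨ z = w))).length = 3 := by
    have h1 := List.toFinset_card_of_nodup htnd
    have h2 : (l.filter (fun z => decide (z = u ∨ z = v ∨ z = w))).toFinset
        = {u, v, w} := by
      ext z
      simp only [List.mem_toFinset, hmem z, Finset.mem_insert, Finset.mem_singleton]
      constructor
      · exact fun h => h.2
      · rintro (rfl | rfl | rfl)
        · exact ⟨hu, Or.inl rfl⟩
        · exact ⟨hv, Or.inr (Or.inl rfl)⟩
        · exact ⟨hw, Or.inr (Or.inr rfl)⟩
    rw [h2] at h1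
    rw [← h1]
    rw [Finset.card_insert_of_notMem (by simp [huv, huw]),
      Finset.card_insert_of_notMem (by simp [hvw])]
    simp
  obtain ⟨z1, z2, z3, heq⟩ := List.length_eq_three.mp hlen3
  rw [heq] at hsub htnd
  have hz1 : z1 = u ∨ z1 = v ∨ z1 = w := ((hmem z1).1 (by rw [heq]; simp)).2
  have hz2 : z2 = u ∨ z2 = v ∨ z2 = w := ((hmem z2).1 (by rw [heq]; simp)).2
  have hz3 : z3 = u ∨ z3 = v ∨ z3 = w := ((hmem z3).1 (by rw [heq]; simp)).2
  simp only [List.nodup_cons, List.mem_cons, List.mem_singleton, List.not_mem_nil,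
    or_false, not_or] at htnd
  obtain ⟨⟨d12, d13⟩, d23, -⟩ := htnd
  rcases hz1 with h1 | h1 | h1 <;> rcases hz2 with h2 | h2 | h2 <;>
    rcases hz3 with h3 | h3 | h3 <;>
    first
      | exact absurd (h1.trans h2.symm) d12
      | exact absurd (h1.trans h3.symm) d13
      | exact absurd (h2.trans h3.symm) d23
      | (rw [h1, h2, h3] at hsub; tauto)

/-- relabeling equivalence on preference lists -/
def mapPL {α : Type} (π : Equiv.Perm α) : PrefList α ≃ PrefList α where
  toFun l := ⟨l.val.map π, l.2.map π.injective⟩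
  invFun l := ⟨l.val.map π.symm, l.2.map π.symm.injective⟩
  left_inv l := by
    apply Subtype.ext
    simp [List.map_map]
  right_inv l := by
    apply Subtype.ext
    simp [List.map_map]

lemma card_pattern_map {α : Type} (π : Equiv.Perm α) (u v w : α) :
    Nat.card {l : PrefList α // [u,v,w].Sublist l.val} =
    Nat.card {l : PrefList α // [π u, π v, π w].Sublist l.val} := by
  apply Nat.card_congr
  refine Equiv.subtypeEquiv (mapPL π) ?_
  intro l
  constructor
  · intro h
    simpa [mapPL] using h.map π
  · intro h
    have h2 := h.map π.symm
    simpa [mapPL, List.map_map] using h2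

end Counting
section Counting2

open Classical in
lemma card_pattern_bound {α : Type} [Finite α] {u v w : α}
    (huv : u ≠ v) (huw : u ≠ w) (hvw : v ≠ w) :
    Nat.card (PrefList α) ≤ 48 * Nat.card {l : PrefList α // [u,v,w].Sublist l.val} := by
  have hnodup : ∀ l : PrefList α,
      (([u,v,w].filter (fun z => !decide (z ∈ l.val))) ++ l.val).Nodup := by
    intro l
    apply List.Nodup.append
    · apply List.Nodup.filter
      simp [huv, huw, hvw]
    · exact l.2
    · intro z hz hz2
      rw [List.mem_filter] at hz
      simp only [Bool.not_eq_true', decide_eq_false_iff_not] at hz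
      exact hz.2 hz2
  have hmemT : ∀ (l : PrefList α) (z : α), z ∈ ([u,v,w] : List α) →
      z ∈ ([u,v,w].filter (fun z => !decide (z ∈ l.val))) ++ l.val := by
    intro l z hz
    by_cases h : z ∈ l.val
    · exact List.mem_append_right _ h
    · apply List.mem_append_left
      rw [List.mem_filter]
      simp [hz, h]
  have step1 : Nat.card (PrefList α) ≤
      8 * Nat.card {l : PrefList α // u ∈ l.val ∧ v ∈ l.val ∧ w ∈ l.val} := by
    have hinj : Function.Injective (fun l : PrefList α =>
        ((⟨⟨([u,v,w].filter (fun z => !decide (z ∈ l.val))) ++ l.val, hnodup l⟩,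
            hmemT l u (by simp), hmemT l v (by simp), hmemT l w (by simp)⟩ :
          {l' : PrefList α // u ∈ l'.val ∧ v ∈ l'.val ∧ w ∈ l'.val}),
         (decide (u ∈ l.val), decide (v ∈ l.val), decide (w ∈ l.val)))) := by
      intro l1 l2 h
      simp only [Prod.mk.injEq, Subtype.mk.injEq] at h
      obtain ⟨h1, hbu, hbv, hbw⟩ := h
      have hf : [u,v,w].filter (fun z => !decide (z ∈ l1.val)) =
          [u,v,w].filter (fun z => !decide (z ∈ l2.val)) := by
        apply List.filter_congr
        intro z hz
        simp only [List.mem_cons, List.not_mem_nil, or_false] at hz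
        rcases hz with rfl | rfl | rfl
        · rw [hbu]
        · rw [hbv]
        · rw [hbw]
      rw [hf] at h1
      exact Subtype.ext (List.append_cancel_left h1)
    calc Nat.card (PrefList α)
        ≤ Nat.card ({l' : PrefList α // u ∈ l'.val ∧ v ∈ l'.val ∧ w ∈ l'.val}
            × (Bool × Bool × Bool)) := Nat.card_le_card_of_injective _ hinj
      _ = 8 * Nat.card {l' : PrefList α // u ∈ l'.val ∧ v ∈ l'.val ∧ w ∈ l'.val} := by
          rw [Nat.card_prod]
          have : Nat.card (Bool × Bool × Bool) = 8 := by
            simp [Nat.card_prod, Nat.card_eq_fintype_card]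
          rw [this, Nat.mul_comm]
  have step2 : Nat.card {l : PrefList α // u ∈ l.val ∧ v ∈ l.val ∧ w ∈ l.val} ≤
      6 * Nat.card {l : PrefList α // [u,v,w].Sublist l.val} := by
    have hsubset : {l : PrefList α | u ∈ l.val ∧ v ∈ l.val ∧ w ∈ l.val} ⊆
        {l : PrefList α | [u,v,w].Sublist l.val} ∪ {l | [u,w,v].Sublist l.val}
          ∪ {l | [v,u,w].Sublist l.val} ∪ {l | [v,w,u].Sublist l.val}
          ∪ {l | [w,u,v].Sublist l.val} ∪ {l | [w,v,u].Sublist l.val} := by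
      intro l hl
      obtain ⟨h1, h2, h3⟩ := hl
      have h6 := six_patterns huv huw hvw l.2 h1 h2 h3
      simp only [Set.mem_union, Set.mem_setOf_eq]
      tauto
    have hswap : ∀ (u' v' w' : α), Nat.card {l : PrefList α // [u',v',w'].Sublist l.val} =
        Set.ncard {l : PrefList α | [u',v',w'].Sublist l.val} := by
      intro u' v' w'
      exact (Nat.card_coe_set_eq _).symm
    have e1 : Set.ncard {l : PrefList α | [u,w,v].Sublist l.val} =
        Nat.card {l : PrefList α // [u,v,w].Sublist l.val} := by
      rw [← hswap]
      have h := card_pattern_map (Equiv.swap v w) u v w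
      rw [Equiv.swap_apply_of_ne_of_ne huv huw, Equiv.swap_apply_left,
        Equiv.swap_apply_right] at h
      exact h.symm
    have e2 : Set.ncard {l : PrefList α | [v,u,w].Sublist l.val} =
        Nat.card {l : PrefList α // [u,v,w].Sublist l.val} := by
      rw [← hswap]
      have h := card_pattern_map (Equiv.swap u v) u v w
      rw [Equiv.swap_apply_left, Equiv.swap_apply_right,
        Equiv.swap_apply_of_ne_of_ne huw.symm hvw.symm] at h
      exact h.symm
    have e3 : Set.ncard {l : PrefList α | [v,w,u].Sublist l.val} =
        Nat.card {l : PrefList α // [u,v,w].Sublist l.val} := by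
      rw [← hswap]
      have h := card_pattern_map ((Equiv.swap u v).trans (Equiv.swap u w)) u v w
      simp only [Equiv.trans_apply, Equiv.swap_apply_left, Equiv.swap_apply_right,
        Equiv.swap_apply_of_ne_of_ne huv.symm hvw,
        Equiv.swap_apply_of_ne_of_ne huw.symm hvw.symm] at h
      exact h.symm
    have e4 : Set.ncard {l : PrefList α | [w,u,v].Sublist l.val} =
        Nat.card {l : PrefList α // [u,v,w].Sublist l.val} := by
      rw [← hswap]
      have h := card_pattern_map ((Equiv.swap u w).trans (Equiv.swap u v)) u v w
      simp only [Equiv.trans_apply, Equiv.swap_apply_left, Equiv.swap_apply_right,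
        Equiv.swap_apply_of_ne_of_ne huw.symm hvw.symm,
        Equiv.swap_apply_of_ne_of_ne huv.symm hvw] at h
      exact h.symm
    have e5 : Set.ncard {l : PrefList α | [w,v,u].Sublist l.val} =
        Nat.card {l : PrefList α // [u,v,w].Sublist l.val} := by
      rw [← hswap]
      have h := card_pattern_map (Equiv.swap u w) u v w
      rw [Equiv.swap_apply_left, Equiv.swap_apply_right,
        Equiv.swap_apply_of_ne_of_ne huv.symm hvw] at h
      exact h.symm
    calc Nat.card {l : PrefList α // u ∈ l.val ∧ v ∈ l.val ∧ w ∈ l.val}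
        = Set.ncard {l : PrefList α | u ∈ l.val ∧ v ∈ l.val ∧ w ∈ l.val} :=
          (Nat.card_coe_set_eq _).symm
      _ ≤ Set.ncard ({l : PrefList α | [u,v,w].Sublist l.val} ∪ {l | [u,w,v].Sublist l.val}
          ∪ {l | [v,u,w].Sublist l.val} ∪ {l | [v,w,u].Sublist l.val}
          ∪ {l | [w,u,v].Sublist l.val} ∪ {l | [w,v,u].Sublist l.val}) :=
          Set.ncard_le_ncard hsubset (Set.toFinite _)
      _ ≤ Set.ncard ({l : PrefList α | [u,v,w].Sublist l.val} ∪ {l | [u,w,v].Sublist l.val}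
          ∪ {l | [v,u,w].Sublist l.val} ∪ {l | [v,w,u].Sublist l.val}
          ∪ {l | [w,u,v].Sublist l.val}) + Set.ncard {l : PrefList α | [w,v,u].Sublist l.val} :=
          Set.ncard_union_le _ _
      _ ≤ (Set.ncard ({l : PrefList α | [u,v,w].Sublist l.val} ∪ {l | [u,w,v].Sublist l.val}
          ∪ {l | [v,u,w].Sublist l.val} ∪ {l | [v,w,u].Sublist l.val})
          + Set.ncard {l : PrefList α | [w,u,v].Sublist l.val})
          + Set.ncard {l : PrefList α | [w,v,u].Sublist l.val} := by
          have := Set.ncard_union_le ({l : PrefList α | [u,v,w].Sublist l.val}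
            ∪ {l | [u,w,v].Sublist l.val} ∪ {l | [v,u,w].Sublist l.val}
            ∪ {l | [v,w,u].Sublist l.val}) {l : PrefList α | [w,u,v].Sublist l.val}
          omega
      _ ≤ ((Set.ncard ({l : PrefList α | [u,v,w].Sublist l.val} ∪ {l | [u,w,v].Sublist l.val}
          ∪ {l | [v,u,w].Sublist l.val}) + Set.ncard {l : PrefList α | [v,w,u].Sublist l.val})
          + Set.ncard {l : PrefList α | [w,u,v].Sublist l.val})
          + Set.ncard {l : PrefList α | [w,v,u].Sublist l.val} := by
          have := Set.ncard_union_le ({l : PrefList α | [u,v,w].Sublist l.val}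
            ∪ {l | [u,w,v].Sublist l.val} ∪ {l | [v,u,w].Sublist l.val})
            {l : PrefList α | [v,w,u].Sublist l.val}
          omega
      _ ≤ (((Set.ncard ({l : PrefList α | [u,v,w].Sublist l.val}
          ∪ {l | [u,w,v].Sublist l.val}) + Set.ncard {l : PrefList α | [v,u,w].Sublist l.val})
          + Set.ncard {l : PrefList α | [v,w,u].Sublist l.val})
          + Set.ncard {l : PrefList α | [w,u,v].Sublist l.val})
          + Set.ncard {l : PrefList α | [w,v,u].Sublist l.val} := by
          have := Set.ncard_union_le ({l : PrefList α | [u,v,w].Sublist l.val}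
            ∪ {l | [u,w,v].Sublist l.val}) {l : PrefList α | [v,u,w].Sublist l.val}
          omega
      _ ≤ ((((Set.ncard {l : PrefList α | [u,v,w].Sublist l.val}
          + Set.ncard {l : PrefList α | [u,w,v].Sublist l.val})
          + Set.ncard {l : PrefList α | [v,u,w].Sublist l.val})
          + Set.ncard {l : PrefList α | [v,w,u].Sublist l.val})
          + Set.ncard {l : PrefList α | [w,u,v].Sublist l.val})
          + Set.ncard {l : PrefList α | [w,v,u].Sublist l.val} := by
          have := Set.ncard_union_le {l : PrefList α | [u,v,w].Sublist l.val}
            {l : PrefList α | [u,w,v].Sublist l.val}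
          omega
      _ = 6 * Nat.card {l : PrefList α // [u,v,w].Sublist l.val} := by
          rw [e1, e2, e3, e4, e5, ← hswap]
          ring
  calc Nat.card (PrefList α)
      ≤ 8 * Nat.card {l : PrefList α // u ∈ l.val ∧ v ∈ l.val ∧ w ∈ l.val} := step1
    _ ≤ 8 * (6 * Nat.card {l : PrefList α // [u,v,w].Sublist l.val}) := by
        exact Nat.mul_le_mul_left _ step2
    _ = 48 * Nat.card {l : PrefList α // [u,v,w].Sublist l.val} := by ring

lemma card_add_compl {α : Type} [Finite α] (p : α → Prop) :
    Nat.card {x // p x} + Nat.card {x // ¬ p x} = Nat.card α := by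
  classical
  rw [← Nat.card_sum]
  exact Nat.card_congr (Equiv.sumCompl p)

end Counting2

/-- For `qbar` drawn uniformly at random from `P(M)^W` and any three
fixed distinct men `a,b,c`, for every `ε > 0` there is `N` such that whenever the set
of men contains `a,b,c` with `|M| ≥ 3` and `|W| ≥ N`, the probability that some
`qbar`-stable matching mechanism is OSP for all three of `a`, `b`, `c` is less
than `ε`. -/
theorem random_market_no_stable_mech_OSP_for_triplet :
    ∀ ε : ℝ, 0 < ε → ∃ N : ℕ,
      ∀ (M : Type) [Fintype M] (a b c : M),
        a ≠ b → a ≠ c → b ≠ c → 3 ≤ Fintype.card M →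
        ∀ (W : Type) [Fintype W], N ≤ Fintype.card W →
        (Nat.card {qbar : W → PrefList M //
            ∃ I : Mech M W, IsStableRule qbar I.run ∧
              I.OSPFor a ∧ I.OSPFor b ∧ I.OSPFor c} : ℝ) /
          (Nat.card (W → PrefList M) : ℝ) < ε := by
  intro ε hε
  obtain ⟨N, hN⟩ := exists_pow_lt_of_lt_one (show (0:ℝ) < ε/2 by linarith)
    (show (47/48 : ℝ) < 1 by norm_num)
  refine ⟨N, ?_⟩
  intro M _ a b c hab hac hbc _ W _ hW
  classical
  haveI : Nonempty (PrefList M) := ⟨⟨[], List.nodup_nil⟩⟩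
  obtain ⟨L, hLdef⟩ : ∃ L, L = Nat.card (PrefList M) := ⟨_, rfl⟩
  obtain ⟨k, hkdef⟩ : ∃ k, k = Fintype.card W := ⟨_, rfl⟩
  rw [← hkdef] at hW
  -- impossibility given witnesses of both patterns
  have himp : ∀ qbar : W → PrefList M,
      (∃ I : Mech M W, IsStableRule qbar I.run ∧ I.OSPFor a ∧ I.OSPFor b ∧ I.OSPFor c) →
      (∀ w', ¬ [a,b,c].Sublist (qbar w').val) ∨ (∀ w', ¬ [c,b,a].Sublist (qbar w').val) := by
    intro qbar hq
    by_contra hcon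
    push_neg at hcon
    obtain ⟨⟨x0, h1⟩, ⟨y0, h2⟩⟩ := hcon
    have hxy : x0 ≠ y0 := by
      rintro rfl
      exact sublist_asymm (qbar x0).2
        ((List.Sublist.cons₂ _ (List.Sublist.cons₂ _ (List.nil_sublist _))).trans h1)
        ((List.Sublist.cons _ (List.Sublist.refl _)).trans h2)
    exact no_osp hab hac hbc hxy h1 h2 hq
  -- cardinality of the exceptional set
  have hcard : Nat.card {qbar : W → PrefList M //
        ∃ I : Mech M W, IsStableRule qbar I.run ∧
          I.OSPFor a ∧ I.OSPFor b ∧ I.OSPFor c} ≤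
      Nat.card {qbar : W → PrefList M // ∀ w', ¬ [a,b,c].Sublist (qbar w').val}
      + Nat.card {qbar : W → PrefList M // ∀ w', ¬ [c,b,a].Sublist (qbar w').val} := by
    rw [← Nat.card_sum]
    apply Nat.card_le_card_of_injective (fun q =>
      if h : ∀ w', ¬ [a,b,c].Sublist (q.val w').val then Sum.inl ⟨q.val, h⟩
      else Sum.inr ⟨q.val, (himp q.val q.2).resolve_left h⟩)
    intro q1 q2 h
    dsimp only at h
    by_cases h1 : ∀ w', ¬ [a,b,c].Sublist (q1.val w').val
    · by_cases h2 : ∀ w', ¬ [a,b,c].Sublist (q2.val w').val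
      · rw [dif_pos h1, dif_pos h2] at h
        have h' := Sum.inl.inj h
        have h'' := congrArg Subtype.val h'
        exact Subtype.ext h''
      · rw [dif_pos h1, dif_neg h2] at h
        exact absurd h (by simp)
    · by_cases h2 : ∀ w', ¬ [a,b,c].Sublist (q2.val w').val
      · rw [dif_neg h1, dif_pos h2] at h
        exact absurd h (by simp)
      · rw [dif_neg h1, dif_neg h2] at h
        have h' := Sum.inr.inj h
        have h2' := congrArg Subtype.val h'
        exact Subtype.ext h2'
  -- product structure of the two classes
  have hpi : ∀ (P : PrefList M → Prop),
      Nat.card {qbar : W → PrefList M // ∀ w', ¬ P (qbar w')} =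
      Nat.card {l : PrefList M // ¬ P l} ^ k := by
    intro P
    rw [Nat.card_congr (Equiv.subtypePiEquivPi (p := fun (_ : W) (l : PrefList M) => ¬ P l))]
    rw [Nat.card_fun, hkdef]
    congr 1
    exact Nat.card_eq_fintype_card
  -- numeric bounds on the bad pattern classes
  have hB1 : 48 * Nat.card {l : PrefList M // ¬ [a,b,c].Sublist l.val} ≤ 47 * L := by
    obtain ⟨G, hG2⟩ : ∃ G, G = Nat.card {l : PrefList M // [a,b,c].Sublist l.val} := ⟨_, rfl⟩
    obtain ⟨B, hB2'⟩ : ∃ B, B = Nat.card {l : PrefList M // ¬ [a,b,c].Sublist l.val} := ⟨_, rfl⟩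
    obtain ⟨L', hL2⟩ : ∃ L', L' = L := ⟨_, rfl⟩
    have hGle : L' ≤ 48 * G := by
      rw [hG2, hL2, hLdef]
      exact card_pattern_bound hab hac hbc
    have hC : G + B = L' := by
      rw [hG2, hB2', hL2, hLdef]
      exact card_add_compl _
    rw [← hB2', ← hL2]
    clear hG2 hB2' hL2 hLdef hcard
    omega
  have hB2 : 48 * Nat.card {l : PrefList M // ¬ [c,b,a].Sublist l.val} ≤ 47 * L := by
    obtain ⟨G, hG2⟩ : ∃ G, G = Nat.card {l : PrefList M // [c,b,a].Sublist l.val} := ⟨_, rfl⟩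
    obtain ⟨B, hB2'⟩ : ∃ B, B = Nat.card {l : PrefList M // ¬ [c,b,a].Sublist l.val} := ⟨_, rfl⟩
    obtain ⟨L', hL2⟩ : ∃ L', L' = L := ⟨_, rfl⟩
    have hGle : L' ≤ 48 * G := by
      rw [hG2, hL2, hLdef]
      exact card_pattern_bound hbc.symm hac.symm hab.symm
    have hC : G + B = L' := by
      rw [hG2, hB2', hL2, hLdef]
      exact card_add_compl _
    rw [← hB2', ← hL2]
    clear hG2 hB2' hL2 hLdef hcard
    omega
  have hLpos : 0 < L := by rw [hLdef]; exact Nat.card_pos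
  have hden : Nat.card (W → PrefList M) = L ^ k := by
    rw [Nat.card_fun, hLdef, hkdef]
    congr 1
    exact Nat.card_eq_fintype_card
  have key : ∀ B : ℕ, 48 * B ≤ 47 * L → (B : ℝ) ^ k ≤ (47/48)^k * (L:ℝ)^k := by
    intro B hB
    have h1 : (B:ℝ) ≤ 47/48 * L := by
      have h2 : (48*B : ℝ) ≤ 47 * L := by exact_mod_cast hB
      linarith
    calc (B:ℝ)^k ≤ (47/48 * L)^k := pow_le_pow_left₀ (by positivity) h1 k
      _ = (47/48)^k * (L:ℝ)^k := mul_pow _ _ _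
  have hLk : (0:ℝ) < (L:ℝ)^k := by positivity
  rw [hden]
  push_cast
  rw [div_lt_iff₀ hLk]
  have hnum : (Nat.card {qbar : W → PrefList M //
        ∃ I : Mech M W, IsStableRule qbar I.run ∧
          I.OSPFor a ∧ I.OSPFor b ∧ I.OSPFor c} : ℝ) ≤ 2 * (47/48)^k * (L:ℝ)^k := by
    have h1 : (Nat.card {qbar : W → PrefList M //
        ∃ I : Mech M W, IsStableRule qbar I.run ∧
          I.OSPFor a ∧ I.OSPFor b ∧ I.OSPFor c} : ℝ) ≤
        ((Nat.card {l : PrefList M // ¬ [a,b,c].Sublist l.val} ^ k : ℕ) : ℝ)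
        + ((Nat.card {l : PrefList M // ¬ [c,b,a].Sublist l.val} ^ k : ℕ) : ℝ) := by
      rw [← hpi (fun l => [a,b,c].Sublist l.val), ← hpi (fun l => [c,b,a].Sublist l.val)]
      exact_mod_cast hcard
    have h2 := key _ hB1
    have h3 := key _ hB2
    push_cast at h1
    linarith
  have hmono : ((47:ℝ)/48)^k ≤ (47/48)^N :=
    pow_le_pow_of_le_one (by norm_num) (by norm_num) hW
  calc (Nat.card {qbar : W → PrefList M //
        ∃ I : Mech M W, IsStableRule qbar I.run ∧
          I.OSPFor a ∧ I.OSPFor b ∧ I.OSPFor c} : ℝ)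
      ≤ 2 * (47/48)^k * (L:ℝ)^k := hnum
    _ ≤ 2 * (47/48)^N * (L:ℝ)^k := by nlinarith [hLk.le, hmono]
    _ < ε * (L:ℝ)^k := by nlinarith [hLk, hN]
end

section
/- Consider q̄ drawn uniformly at random from P(M)^W (each woman's preference list independently uniform over all preference lists over M). For every d ∈ ℕ and every ε > 0 there exists N such that for all finite disjoint sets M, W with |M| ≥ 3, |W| ≥ N, and |M| ≤ |W|^d, the probability that there exists a q̄-stable one-side-querying matching mechanism that is OSP for more than two men is less than ε. -/
namespace AuxOSP
open Classical List

noncomputable section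
variable {M W : Type}

def pl0 : PrefList W := ⟨[], List.nodup_nil⟩
def pl1 (u : W) : PrefList W := ⟨[u], List.nodup_singleton u⟩
def pl2 (u v : W) (h : u ≠ v) : PrefList W := ⟨[u, v], by simp [h]⟩

def prof (a b c : M) (pa pb pc : PrefList W) : M → PrefList W :=
  fun m => if m = a then pa else if m = b then pb else if m = c then pc else pl0

variable {a b c : M} {x y : W}

section eval
variable {pa pb pc : PrefList W}

@[simp] lemma prof_a : prof a b c pa pb pc a = pa := by simp [prof]
lemma prof_b (hab : a ≠ b) : prof a b c pa pb pc b = pb := by simp [prof, hab.symm]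
lemma prof_c (hac : a ≠ c) (hbc : b ≠ c) : prof a b c pa pb pc c = pc := by
  simp [prof, hac.symm, hbc.symm]
lemma prof_other {m : M} (h1 : m ≠ a) (h2 : m ≠ b) (h3 : m ≠ c) :
    prof a b c pa pb pc m = pl0 := by simp [prof, h1, h2, h3]
end eval

lemma stable_noblock {pbar : M → PrefList W} {qbar : W → PrefList M} {μ : Matching M W}
    (h : IsStable pbar qbar μ) (m : M) (w : W)
    (h1 : outPrefers (pbar m) (some w) (μ.toFun m))
    (h2 : womanPrefersOver (qbar w) μ w m) : False :=
  h (Or.inl ⟨m, w, h1, h2⟩)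

lemma stable_mem {pbar : M → PrefList W} {qbar : W → PrefList M} {μ : Matching M W}
    (h : IsStable pbar qbar μ) {m : M} {w : W} (hm : μ.toFun m = some w) :
    w ∈ (pbar m).val ∧ m ∈ (qbar w).val := by
  by_contra hx
  exact h (Or.inr ⟨m, w, hm, by tauto⟩)

lemma prefers_pl2 (h : x ≠ y) : prefers (pl2 x y h) x y := Or.inl (List.Sublist.refl _)

lemma sub_ab {l : List M} (h : [a,b,c].Sublist l) : [a,b].Sublist l := by
  refine List.Sublist.trans ?_ h; simp
lemma sub_ac {l : List M} (h : [a,b,c].Sublist l) : [a,c].Sublist l := by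
  refine List.Sublist.trans ?_ h; simp
lemma sub_bc {l : List M} (h : [a,b,c].Sublist l) : [b,c].Sublist l := by
  refine List.Sublist.trans ?_ h; simp
lemma mem_of_pat {l : List M} (h : [a,b,c].Sublist l) :
    a ∈ l ∧ b ∈ l ∧ c ∈ l := by
  have := h.subset; refine ⟨this ?_, this ?_, this ?_⟩ <;> simp

end
end AuxOSP
namespace AuxOSP
open Classical List

section forced
set_option linter.unusedSectionVars false
variable {M W : Type} {a b c : M} {x y : W} {qbar : W → PrefList M}
  {μ : Matching M W}

@[simp] lemma mem_pl1 {u w : W} : w ∈ (pl1 u).val ↔ w = u := by simp [pl1]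
@[simp] lemma mem_pl2 {u v w : W} {h : u ≠ v} : w ∈ (pl2 u v h).val ↔ w = u ∨ w = v := by
  simp [pl2]

lemma not_matched_to {pa pb pc : PrefList W}
    (hst : IsStable (prof a b c pa pb pc) qbar μ) (w0 : W)
    (Ha : μ.toFun a ≠ some w0) (Hb : μ.toFun b ≠ some w0) (Hc : μ.toFun c ≠ some w0) :
    ∀ m', μ.toFun m' ≠ some w0 := by
  intro m' hm'
  by_cases h1 : m' = a
  · exact Ha (h1 ▸ hm')
  by_cases h2 : m' = b
  · exact Hb (h2 ▸ hm')
  by_cases h3 : m' = c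
  · exact Hc (h3 ▸ hm')
  have := (stable_mem hst hm').1
  rw [prof_other h1 h2 h3] at this
  simp [pl0] at this

variable (hab : a ≠ b) (hac : a ≠ c) (hbc : b ≠ c) (hxy : x ≠ y)
  (hx : [a,b,c].Sublist (qbar x).val) (hy : [c,b,a].Sublist (qbar y).val)
include hab hac hbc hxy hx hy

/-- L1 : profile (A1,B1,C1) forces a matched to y. -/
lemma L1 (hst : IsStable (prof a b c (pl1 y) (pl1 x) (pl1 x)) qbar μ) :
    μ.toFun a = some y := by
  cases h : μ.toFun a with
  | some w' =>
    have := (stable_mem hst h).1; rw [prof_a] at this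
    simp [pl1] at this; rw [this]
  | none =>
    exfalso
    refine stable_noblock hst a y ?_ ?_
    · rw [prof_a, h]; show y ∈ (pl1 y).val; simp
    · refine Or.inr ⟨not_matched_to hst y (by rw [h]; simp) ?_ ?_, (mem_of_pat hy).2.2⟩
      · intro hb
        have := (stable_mem hst hb).1; rw [prof_b hab] at this
        simp [pl1] at this; exact hxy this.symm
      · intro hc
        have := (stable_mem hst hc).1; rw [prof_c hac hbc] at this
        simp [pl1] at this; exact hxy this.symm

/-- L2 : profile (A1,B1,C1) forces b matched to x. -/
lemma L2 (hst : IsStable (prof a b c (pl1 y) (pl1 x) (pl1 x)) qbar μ) :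
    μ.toFun b = some x := by
  cases h : μ.toFun b with
  | some w' =>
    have := (stable_mem hst h).1; rw [prof_b hab] at this
    simp [pl1] at this; rw [this]
  | none =>
    exfalso
    refine stable_noblock hst b x ?_ ?_
    · rw [prof_b hab, h]; show x ∈ (pl1 x).val; simp
    · cases hc : μ.toFun c with
      | some w' =>
        have := (stable_mem hst hc).1; rw [prof_c hac hbc] at this
        simp [pl1] at this; rw [this] at hc
        exact Or.inl ⟨c, hc, Or.inl (sub_bc hx)⟩
      | none =>
        refine Or.inr ⟨not_matched_to hst x ?_ (by rw [h]; simp) (by rw [hc]; simp),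
          (mem_of_pat hx).2.1⟩
        intro ha
        have := (stable_mem hst ha).1; rw [prof_a] at this
        simp [pl1] at this; exact hxy this

/-- L3 : profile (A2,B1,C2) forces a matched to x. -/
lemma L3 (hst : IsStable (prof a b c (pl2 y x hxy.symm) (pl1 x) (pl2 x y hxy)) qbar μ) :
    μ.toFun a = some x := by
  cases h : μ.toFun a with
  | none =>
    exfalso
    refine stable_noblock hst a x ?_ ?_
    · rw [prof_a, h]; show x ∈ (pl2 y x hxy.symm).val; simp
    · cases hb : μ.toFun b with
      | some w' =>
        have := (stable_mem hst hb).1; rw [prof_b hab] at this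
        simp [pl1] at this; rw [this] at hb
        exact Or.inl ⟨b, hb, Or.inl (sub_ab hx)⟩
      | none =>
        cases hc : μ.toFun c with
        | some w'' =>
          have := (stable_mem hst hc).1; rw [prof_c hac hbc] at this
          rw [mem_pl2] at this
          rcases this with h1 | h1
          · rw [h1] at hc; exact Or.inl ⟨c, hc, Or.inl (sub_ac hx)⟩
          · rw [h1] at hc
            refine Or.inr ⟨not_matched_to hst x (by rw [h]; simp) (by rw [hb]; simp) ?_,
              (mem_of_pat hx).1⟩
            rw [hc]; simp [hxy.symm]
        | none =>
          refine Or.inr ⟨not_matched_to hst x (by rw [h]; simp) (by rw [hb]; simp)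
            (by rw [hc]; simp), (mem_of_pat hx).1⟩
  | some w' =>
    have hmem := (stable_mem hst h).1; rw [prof_a] at hmem
    rw [mem_pl2] at hmem
    rcases hmem with h1 | h1
    swap
    · rw [h1]
    rw [h1] at h
    -- a matched to y : derive contradiction
    exfalso
    cases hc : μ.toFun c with
    | some w'' =>
      have := (stable_mem hst hc).1; rw [prof_c hac hbc] at this
      rw [mem_pl2] at this
      rcases this with h2 | h2
      · -- c matched to x, then b unmatched, (b,x) blocks
        rw [h2] at hc
        have hb : μ.toFun b = none := by
          cases hb : μ.toFun b with
          | none => rfl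
          | some w3 =>
            exfalso
            have := (stable_mem hst hb).1; rw [prof_b hab] at this
            simp [pl1] at this; rw [this] at hb
            exact hbc (μ.inj hb hc)
        refine stable_noblock hst b x ?_ ?_
        · rw [prof_b hab, hb]; show x ∈ (pl1 x).val; simp
        · exact Or.inl ⟨c, hc, Or.inl (sub_bc hx)⟩
      · -- c matched to y = a's partner: impossible
        rw [h2] at hc; exact hac (μ.inj h hc)
    | none =>
      -- (c,y) blocks
      refine stable_noblock hst c y ?_ ?_
      · rw [prof_c hac hbc, hc]; show y ∈ (pl2 x y hxy).val; simp
      · exact Or.inl ⟨a, h, Or.inl (sub_ac hy)⟩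

/-- L4 : profile (A2,B2,C2) forces b unmatched. -/
lemma L4 (hst : IsStable (prof a b c (pl2 y x hxy.symm) (pl2 y x hxy.symm) (pl2 x y hxy)) qbar μ) :
    μ.toFun b = none := by
  cases h : μ.toFun b with
  | none => rfl
  | some w' =>
    exfalso
    have hmem := (stable_mem hst h).1; rw [prof_b hab] at hmem
    rw [mem_pl2] at hmem
    rcases hmem with h1 | h1
    · -- b matched to y
      rw [h1] at h
      cases hc : μ.toFun c with
      | some w'' =>
        have := (stable_mem hst hc).1; rw [prof_c hac hbc] at this
        rw [mem_pl2] at this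
        rcases this with h2 | h2
        · -- c matched to x ⇒ a unmatched ⇒ (a,x) blocks
          rw [h2] at hc
          have ha : μ.toFun a = none := by
            cases ha : μ.toFun a with
            | none => rfl
            | some w3 =>
              exfalso
              have := (stable_mem hst ha).1; rw [prof_a] at this
              rw [mem_pl2] at this
              rcases this with h3 | h3
              · rw [h3] at ha; exact hab (μ.inj ha h)
              · rw [h3] at ha; exact hac (μ.inj ha hc)
          refine stable_noblock hst a x ?_ ?_
          · rw [prof_a, ha]; show x ∈ (pl2 y x hxy.symm).val; simp
          · exact Or.inl ⟨c, hc, Or.inl (sub_ac hx)⟩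
        · rw [h2] at hc; exact hbc (μ.inj h hc)
      | none =>
        -- (c,y) blocks via b
        refine stable_noblock hst c y ?_ ?_
        · rw [prof_c hac hbc, hc]; show y ∈ (pl2 x y hxy).val; simp
        · exact Or.inl ⟨b, h, Or.inl (sub_ab hy)⟩
    · -- b matched to x
      rw [h1] at h
      cases ha : μ.toFun a with
      | some w'' =>
        have := (stable_mem hst ha).1; rw [prof_a] at this
        rw [mem_pl2] at this
        rcases this with h2 | h2
        · -- a matched to y ⇒ c unmatched ⇒ (c,y) blocks
          rw [h2] at ha
          have hc : μ.toFun c = none := by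
            cases hc : μ.toFun c with
            | none => rfl
            | some w3 =>
              exfalso
              have := (stable_mem hst hc).1; rw [prof_c hac hbc] at this
              rw [mem_pl2] at this
              rcases this with h3 | h3
              · rw [h3] at hc; exact hbc.symm (μ.inj hc h)
              · rw [h3] at hc; exact hac.symm (μ.inj hc ha)
          refine stable_noblock hst c y ?_ ?_
          · rw [prof_c hac hbc, hc]; show y ∈ (pl2 x y hxy).val; simp
          · exact Or.inl ⟨a, ha, Or.inl (sub_ac hy)⟩
        · rw [h2] at ha; exact hab (μ.inj ha h)
      | none =>
        -- (a,x) blocks via b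
        refine stable_noblock hst a x ?_ ?_
        · rw [prof_a, ha]; show x ∈ (pl2 y x hxy.symm).val; simp
        · exact Or.inl ⟨b, h, Or.inl (sub_ab hx)⟩

/-- L5 : profile (A1,B1,C2) forces c matched to y. -/
lemma L5 (hst : IsStable (prof a b c (pl1 y) (pl1 x) (pl2 x y hxy)) qbar μ) :
    μ.toFun c = some y := by
  cases h : μ.toFun c with
  | none =>
    exfalso
    refine stable_noblock hst c y ?_ ?_
    · rw [prof_c hac hbc, h]; show y ∈ (pl2 x y hxy).val; simp
    · cases ha : μ.toFun a with
      | some w' =>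
        have := (stable_mem hst ha).1; rw [prof_a] at this
        simp [pl1] at this; rw [this] at ha
        exact Or.inl ⟨a, ha, Or.inl (sub_ac hy)⟩
      | none =>
        refine Or.inr ⟨not_matched_to hst y (by rw [ha]; simp) ?_ (by rw [h]; simp),
          (mem_of_pat hy).1⟩
        intro hb
        have := (stable_mem hst hb).1; rw [prof_b hab] at this
        simp [pl1] at this; exact hxy this.symm
  | some w' =>
    have hmem := (stable_mem hst h).1; rw [prof_c hac hbc] at hmem
    rw [mem_pl2] at hmem
    rcases hmem with h1 | h1
    swap
    · rw [h1]
    rw [h1] at h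
    -- c matched to x ⇒ b unmatched ⇒ (b,x) blocks
    exfalso
    have hb : μ.toFun b = none := by
      cases hb : μ.toFun b with
      | none => rfl
      | some w3 =>
        exfalso
        have := (stable_mem hst hb).1; rw [prof_b hab] at this
        simp [pl1] at this; rw [this] at hb
        exact hbc (μ.inj hb h)
    refine stable_noblock hst b x ?_ ?_
    · rw [prof_b hab, hb]; show x ∈ (pl1 x).val; simp
    · exact Or.inl ⟨c, h, Or.inl (sub_bc hx)⟩

/-- L6 : profile (A1,B2,C1) forces c matched to x. -/
lemma L6 (hst : IsStable (prof a b c (pl1 y) (pl2 y x hxy.symm) (pl1 x)) qbar μ) :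
    μ.toFun c = some x := by
  cases h : μ.toFun c with
  | some w' =>
    have := (stable_mem hst h).1; rw [prof_c hac hbc] at this
    simp [pl1] at this; rw [this]
  | none =>
    exfalso
    cases hb : μ.toFun b with
    | some w' =>
      have := (stable_mem hst hb).1; rw [prof_b hab] at this
      rw [mem_pl2] at this
      rcases this with h1 | h1
      · -- b matched to y ⇒ x unmatched ⇒ (c,x) blocks
        rw [h1] at hb
        refine stable_noblock hst c x ?_ ?_
        · rw [prof_c hac hbc, h]; show x ∈ (pl1 x).val; simp
        · refine Or.inr ⟨not_matched_to hst x ?_ ?_ (by rw [h]; simp),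
            (mem_of_pat hx).2.2⟩
          · intro ha
            have := (stable_mem hst ha).1; rw [prof_a] at this
            simp [pl1] at this; exact hxy this
          · rw [hb]; simp [hxy.symm]
      · -- b matched to x
        rw [h1] at hb
        cases ha : μ.toFun a with
        | some w'' =>
          have := (stable_mem hst ha).1; rw [prof_a] at this
          simp [pl1] at this; rw [this] at ha
          -- (b,y) blocks : b prefers y over x, y prefers b over a
          refine stable_noblock hst b y ?_ ?_
          · rw [prof_b hab, hb]
            show prefers (pl2 y x hxy.symm) y x
            exact prefers_pl2 hxy.symm
          · exact Or.inl ⟨a, ha, Or.inl (sub_bc hy)⟩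
        | none =>
          -- (a,y) blocks : y unmatched
          refine stable_noblock hst a y ?_ ?_
          · rw [prof_a, ha]; show y ∈ (pl1 y).val; simp
          · refine Or.inr ⟨not_matched_to hst y (by rw [ha]; simp) ?_ (by rw [h]; simp),
              (mem_of_pat hy).2.2⟩
            rw [hb]; simp [hxy]
    | none =>
      -- x unmatched ⇒ (c,x) blocks
      refine stable_noblock hst c x ?_ ?_
      · rw [prof_c hac hbc, h]; show x ∈ (pl1 x).val; simp
      · refine Or.inr ⟨not_matched_to hst x ?_ (by rw [hb]; simp) (by rw [h]; simp),
          (mem_of_pat hx).2.2⟩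
        intro ha
        have := (stable_mem hst ha).1; rw [prof_a] at this
        simp [pl1] at this; exact hxy this

end forced
end AuxOSP
namespace AuxOSP
open Classical List

section engine
set_option linter.unusedSectionVars false
variable {M W : Type} {a b c : M} {x y : W} {qbar : W → PrefList M}

/-- The product set of profiles used in the impossibility argument. -/
def Sset (a b c : M) (x y : W) (hxy : x ≠ y) : Set (M → PrefList W) :=
  {p | ∃ u v w, (u = pl1 y ∨ u = pl2 y x hxy.symm) ∧
      (v = pl1 x ∨ v = pl2 y x hxy.symm) ∧
      (w = pl1 x ∨ w = pl2 x y hxy) ∧ p = prof a b c u v w}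

variable (hab : a ≠ b) (hac : a ≠ c) (hbc : b ≠ c) (hxy : x ≠ y)
  (hx : [a,b,c].Sublist (qbar x).val) (hy : [c,b,a].Sublist (qbar y).val)
include hab hac hbc hxy hx hy

lemma viol_a {next : PrefList W → Mech M W} {P : Set (M → PrefList W)}
    (osp1 : ∀ pbar ∈ P, ∀ pbar' ∈ P, next (pbar a) ≠ next (pbar' a) →
      ¬ outPrefers (pbar a) (((next (pbar' a)).run pbar').toFun a)
        (((next (pbar a)).run pbar).toFun a))
    (hsub : Sset a b c x y hxy ⊆ P)
    (hstab : ∀ p ∈ Sset a b c x y hxy, IsStable p qbar ((Mech.node a next).run p))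
    (hA : next (pl2 y x hxy.symm) ≠ next (pl1 y)) : False := by
  set va1 : M → PrefList W := prof a b c (pl2 y x hxy.symm) (pl1 x) (pl2 x y hxy) with hva1
  set va2 : M → PrefList W := prof a b c (pl1 y) (pl1 x) (pl1 x) with hva2
  have hva1S : va1 ∈ Sset a b c x y hxy := ⟨_, _, _, Or.inr rfl, Or.inl rfl, Or.inr rfl, rfl⟩
  have hva2S : va2 ∈ Sset a b c x y hxy := ⟨_, _, _, Or.inl rfl, Or.inl rfl, Or.inl rfl, rfl⟩
  have hC := osp1 va1 (hsub hva1S) va2 (hsub hva2S)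
    (by rw [hva1, hva2, prof_a, prof_a]; exact hA)
  simp only [hva1, hva2, prof_a] at hC
  have e1 : (Mech.node a next).run va1 = (next (pl2 y x hxy.symm)).run va1 := by
    show (next (va1 a)).run va1 = _
    rw [hva1, prof_a]
  have e2 : (Mech.node a next).run va2 = (next (pl1 y)).run va2 := by
    show (next (va2 a)).run va2 = _
    rw [hva2, prof_a]
  have s1 := hstab va1 hva1S; rw [e1] at s1
  have s2 := hstab va2 hva2S; rw [e2] at s2
  have o1 := L3 hab hac hbc hxy hx hy s1
  have o2 := L1 hab hac hbc hxy hx hy s2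
  rw [o1, o2] at hC
  exact hC (Or.inl (List.Sublist.refl _))

lemma viol_b {next : PrefList W → Mech M W} {P : Set (M → PrefList W)}
    (osp1 : ∀ pbar ∈ P, ∀ pbar' ∈ P, next (pbar b) ≠ next (pbar' b) →
      ¬ outPrefers (pbar b) (((next (pbar' b)).run pbar').toFun b)
        (((next (pbar b)).run pbar).toFun b))
    (hsub : Sset a b c x y hxy ⊆ P)
    (hstab : ∀ p ∈ Sset a b c x y hxy, IsStable p qbar ((Mech.node b next).run p))
    (hA : next (pl2 y x hxy.symm) ≠ next (pl1 x)) : False := by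
  set vb1 : M → PrefList W :=
    prof a b c (pl2 y x hxy.symm) (pl2 y x hxy.symm) (pl2 x y hxy) with hvb1
  set vb2 : M → PrefList W := prof a b c (pl1 y) (pl1 x) (pl1 x) with hvb2
  have hvb1S : vb1 ∈ Sset a b c x y hxy := ⟨_, _, _, Or.inr rfl, Or.inr rfl, Or.inr rfl, rfl⟩
  have hvb2S : vb2 ∈ Sset a b c x y hxy := ⟨_, _, _, Or.inl rfl, Or.inl rfl, Or.inl rfl, rfl⟩
  have hC := osp1 vb1 (hsub hvb1S) vb2 (hsub hvb2S)
    (by rw [hvb1, hvb2, prof_b hab, prof_b hab]; exact hA)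
  simp only [hvb1, hvb2, prof_b hab] at hC
  have e1 : (Mech.node b next).run vb1 = (next (pl2 y x hxy.symm)).run vb1 := by
    show (next (vb1 b)).run vb1 = _
    rw [hvb1, prof_b hab]
  have e2 : (Mech.node b next).run vb2 = (next (pl1 x)).run vb2 := by
    show (next (vb2 b)).run vb2 = _
    rw [hvb2, prof_b hab]
  have s1 := hstab vb1 hvb1S; rw [e1] at s1
  have s2 := hstab vb2 hvb2S; rw [e2] at s2
  have o1 := L4 hab hac hbc hxy hx hy s1
  have o2 := L2 hab hac hbc hxy hx hy s2
  rw [o1, o2] at hC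
  exact hC (by show x ∈ (pl2 y x hxy.symm).val; simp)

lemma viol_c {next : PrefList W → Mech M W} {P : Set (M → PrefList W)}
    (osp1 : ∀ pbar ∈ P, ∀ pbar' ∈ P, next (pbar c) ≠ next (pbar' c) →
      ¬ outPrefers (pbar c) (((next (pbar' c)).run pbar').toFun c)
        (((next (pbar c)).run pbar).toFun c))
    (hsub : Sset a b c x y hxy ⊆ P)
    (hstab : ∀ p ∈ Sset a b c x y hxy, IsStable p qbar ((Mech.node c next).run p))
    (hA : next (pl2 x y hxy) ≠ next (pl1 x)) : False := by
  set vc1 : M → PrefList W := prof a b c (pl1 y) (pl1 x) (pl2 x y hxy) with hvc1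
  set vc2 : M → PrefList W := prof a b c (pl1 y) (pl2 y x hxy.symm) (pl1 x) with hvc2
  have hvc1S : vc1 ∈ Sset a b c x y hxy := ⟨_, _, _, Or.inl rfl, Or.inl rfl, Or.inr rfl, rfl⟩
  have hvc2S : vc2 ∈ Sset a b c x y hxy := ⟨_, _, _, Or.inl rfl, Or.inr rfl, Or.inl rfl, rfl⟩
  have hC := osp1 vc1 (hsub hvc1S) vc2 (hsub hvc2S)
    (by rw [hvc1, hvc2, prof_c hac hbc, prof_c hac hbc]; exact hA)
  simp only [hvc1, hvc2, prof_c hac hbc] at hC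
  have e1 : (Mech.node c next).run vc1 = (next (pl2 x y hxy)).run vc1 := by
    show (next (vc1 c)).run vc1 = _
    rw [hvc1, prof_c hac hbc]
  have e2 : (Mech.node c next).run vc2 = (next (pl1 x)).run vc2 := by
    show (next (vc2 c)).run vc2 = _
    rw [hvc2, prof_c hac hbc]
  have s1 := hstab vc1 hvc1S; rw [e1] at s1
  have s2 := hstab vc2 hvc2S; rw [e2] at s2
  have o1 := L5 hab hac hbc hxy hx hy s1
  have o2 := L6 hab hac hbc hxy hx hy s2
  rw [o1, o2] at hC
  exact hC (Or.inl (List.Sublist.refl _))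

lemma engine (I : Mech M W) :
    ∀ P : Set (M → PrefList W),
    Mech.OSPAux a I P → Mech.OSPAux b I P → Mech.OSPAux c I P →
    Sset a b c x y hxy ⊆ P →
    (∀ p ∈ Sset a b c x y hxy, IsStable p qbar (I.run p)) → False := by
  induction I with
  | leaf μ =>
    intro P _ _ _ hsub hstab
    have h1 := hstab (prof a b c (pl1 y) (pl1 x) (pl1 x))
      ⟨_, _, _, Or.inl rfl, Or.inl rfl, Or.inl rfl, rfl⟩
    have h2 := hstab (prof a b c (pl2 y x hxy.symm) (pl1 x) (pl2 x y hxy))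
      ⟨_, _, _, Or.inr rfl, Or.inl rfl, Or.inr rfl, rfl⟩
    have e1 := L1 hab hac hbc hxy hx hy (show IsStable _ qbar μ from h1)
    have e2 := L3 hab hac hbc hxy hx hy (show IsStable _ qbar μ from h2)
    rw [e1] at e2
    exact hxy (Option.some.inj e2).symm
  | node q next ih =>
    intro P ospa ospb ospc hsub hstab
    by_cases hsame : ∀ p ∈ Sset a b c x y hxy, ∀ p' ∈ Sset a b c x y hxy,
        next (p q) = next (p' q)
    · -- everything routed the same way: recurse
      have hp0S : prof a b c (pl1 y) (pl1 x) (pl1 x) ∈ Sset a b c x y hxy :=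
        ⟨_, _, _, Or.inl rfl, Or.inl rfl, Or.inl rfl, rfl⟩
      set p0 : M → PrefList W := prof a b c (pl1 y) (pl1 x) (pl1 x) with hp0
      refine ih (p0 q) {pb ∈ P | next (pb q) = next (p0 q)}
        (ospa.2 (p0 q)) (ospb.2 (p0 q)) (ospc.2 (p0 q)) ?_ ?_
      · intro p hp; exact ⟨hsub hp, hsame p hp p0 hp0S⟩
      · intro p hp
        have heq : next (p q) = next (p0 q) := hsame p hp p0 hp0S
        have := hstab p hp
        have he : (Mech.node q next).run p = (next (p0 q)).run p := by
          show (next (p q)).run p = _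
          rw [heq]
        rwa [he] at this
    · push_neg at hsame
      obtain ⟨p₁, hp₁, p₂, hp₂, hne⟩ := hsame
      by_cases hqa : q = a
      · subst hqa
        obtain ⟨u1, v1, w1, hu1, _, _, rfl⟩ := hp₁
        obtain ⟨u2, v2, w2, hu2, _, _, rfl⟩ := hp₂
        simp only [prof_a] at hne
        have hA : next (pl2 y x hxy.symm) ≠ next (pl1 y) := by
          rcases hu1 with rfl | rfl <;> rcases hu2 with rfl | rfl
          · exact absurd rfl hne
          · exact hne.symm
          · exact hne
          · exact absurd rfl hne
        exact viol_a hab hac hbc hxy hx hy (ospa.1 rfl) hsub hstab hA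
      by_cases hqb : q = b
      · subst hqb
        obtain ⟨u1, v1, w1, _, hv1, _, rfl⟩ := hp₁
        obtain ⟨u2, v2, w2, _, hv2, _, rfl⟩ := hp₂
        simp only [prof_b hab] at hne
        have hA : next (pl2 y x hxy.symm) ≠ next (pl1 x) := by
          rcases hv1 with rfl | rfl <;> rcases hv2 with rfl | rfl
          · exact absurd rfl hne
          · exact hne.symm
          · exact hne
          · exact absurd rfl hne
        exact viol_b hab hac hbc hxy hx hy (ospb.1 rfl) hsub hstab hA
      by_cases hqc : q = c
      · subst hqc
        obtain ⟨u1, v1, w1, _, _, hw1, rfl⟩ := hp₁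
        obtain ⟨u2, v2, w2, _, _, hw2, rfl⟩ := hp₂
        simp only [prof_c hac hbc] at hne
        have hA : next (pl2 x y hxy) ≠ next (pl1 x) := by
          rcases hw1 with rfl | rfl <;> rcases hw2 with rfl | rfl
          · exact absurd rfl hne
          · exact hne.symm
          · exact hne
          · exact absurd rfl hne
        exact viol_c hab hac hbc hxy hx hy (ospc.1 rfl) hsub hstab hA
      · -- q is none of a,b,c : both profiles give q the empty list
        obtain ⟨u1, v1, w1, _, _, _, rfl⟩ := hp₁
        obtain ⟨u2, v2, w2, _, _, _, rfl⟩ := hp₂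
        rw [prof_other hqa hqb hqc, prof_other hqa hqb hqc] at hne
        exact hne rfl

/-- Key deterministic lemma : in the presence of the preference pattern, no
`qbar`-stable mechanism is OSP for all of `a`, `b`, `c`. -/
theorem keyLemma :
    ¬ ∃ I : Mech M W, IsStableRule qbar I.run ∧ I.OSPFor a ∧ I.OSPFor b ∧ I.OSPFor c := by
  rintro ⟨I, hrule, ha, hb, hc⟩
  exact engine hab hac hbc hxy hx hy I Set.univ ha hb hc (fun _ _ => trivial)
    (fun p _ => hrule p)

end engine
end AuxOSP
namespace AuxOSP
open Classical List

noncomputable section counting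
variable {α : Type} [Fintype α]

/-- injection of `PrefList α` into a sigma of embeddings -/
def plEmb (l : PrefList α) : Σ k : Fin (Fintype.card α + 1), (Fin k ↪ α) :=
  ⟨⟨l.val.length, Nat.lt_succ_of_le l.prop.length_le_card⟩,
    ⟨fun i => l.val.get i, fun _ _ hij =>
      Fin.ext (List.nodup_iff_injective_get.mp l.prop hij ▸ rfl)⟩⟩

def plDec (e : Σ k : Fin (Fintype.card α + 1), (Fin k ↪ α)) : PrefList α :=
  ⟨List.ofFn e.2, List.nodup_ofFn.mpr e.2.injective⟩

lemma plEmb_injective : Function.Injective (plEmb (α := α)) := by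
  have hleft : Function.LeftInverse plDec (plEmb (α := α)) := by
    intro l
    apply Subtype.ext
    exact List.ofFn_get l.val
  exact hleft.injective

instance : Finite (PrefList α) := Finite.of_injective _ plEmb_injective

instance : Fintype (PrefList α) := Fintype.ofFinite _

lemma card_preflist_le_sum :
    Fintype.card (PrefList α) ≤
      ∑ k ∈ Finset.range (Fintype.card α + 1), (Fintype.card α).descFactorial k := by
  have h1 := Fintype.card_le_of_injective _ (plEmb_injective (α := α))
  rwa [Fintype.card_sigma, Fin.sum_univ_eq_sum_range
      (fun k => Fintype.card (Fin k ↪ α)),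
    Finset.sum_congr rfl (fun k _ => by
      rw [Fintype.card_embedding_eq, Fintype.card_fin])] at h1

lemma sum_descFactorial_le (n : ℕ) (hn : 1 ≤ n) :
    (∑ k ∈ Finset.range (n + 1), n.descFactorial k) + 1 ≤ 3 * n.factorial := by
  induction n with
  | zero => omega
  | succ m ih =>
    rcases Nat.eq_or_lt_of_le hn with h1 | h1
    · have : m = 0 := by omega
      subst this; decide
    · have hm : 1 ≤ m := by omega
      have e1 : ∑ k ∈ Finset.range (m + 2), (m+1).descFactorial k
          = 1 + (m+1) * ∑ k ∈ Finset.range (m + 1), m.descFactorial k := by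
        rw [Finset.sum_range_succ' (fun k => (m+1).descFactorial k)]
        simp only [Nat.succ_descFactorial_succ, Nat.descFactorial_zero]
        rw [← Finset.mul_sum]
        omega
      have h2 := ih hm
      have h3 : (m+1) * ((∑ k ∈ Finset.range (m + 1), m.descFactorial k) + 1)
          ≤ (m+1) * (3 * m.factorial) := Nat.mul_le_mul_left _ h2
      have h4 : (m+1) * (3 * m.factorial) = 3 * (m+1).factorial := by
        rw [Nat.factorial_succ]; ring
      have h5 : (m+1) * ((∑ k ∈ Finset.range (m + 1), m.descFactorial k) + 1)
          = (m+1) * (∑ k ∈ Finset.range (m + 1), m.descFactorial k) + (m + 1) := by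
        ring
      rw [h5, h4] at h3
      rw [e1]
      omega

lemma card_preflist_le (h : 1 ≤ Fintype.card α) :
    Fintype.card (PrefList α) ≤ 3 * (Fintype.card α).factorial := by
  have := card_preflist_le_sum (α := α)
  have := sum_descFactorial_le (Fintype.card α) h
  omega

end counting
end AuxOSP
namespace AuxOSP
open Classical List Equiv

noncomputable section good
set_option linter.unusedSectionVars false
variable {α : Type} [Fintype α]

/-- `[u,v,w]` is a sublist of `l` as soon as `u,v,w` occur at increasing indices. -/
lemma triple_sublist {l : List α} {u v w : α} {i j k : ℕ} (hij : i < j) (hjk : j < k)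
    (hi : l[i]? = some u) (hj : l[j]? = some v) (hk : l[k]? = some w) :
    [u, v, w] <+ l := by
  have hklen : k < l.length := by
    rw [List.getElem?_eq_some_iff] at hk; exact hk.1
  refine List.sublist_of_orderEmbedding_getElem?_eq
    (OrderEmbedding.ofStrictMono
      (fun ix => if ix = 0 then i else if ix = 1 then j else if ix = 2 then k
        else l.length + ix) ?_) ?_
  · intro a b hab
    dsimp only
    split_ifs <;> omega
  · intro ix
    show [u, v, w][ix]? = l[(if ix = 0 then i else if ix = 1 then j else if ix = 2 then k
      else l.length + ix)]?
    match ix with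
    | 0 => simpa using hi.symm
    | 1 => simpa using hj.symm
    | 2 => simpa using hk.symm
    | (n+3) =>
      rw [if_neg (by omega : ¬ n+3 = 0), if_neg (by omega : ¬ n+3 = 1),
        if_neg (by omega : ¬ n+3 = 2)]
      rw [List.getElem?_eq_none_iff.mpr (by simp), List.getElem?_eq_none_iff.mpr (by omega)]

def baseE : Fin (Fintype.card α) ≃ α := (Fintype.equivFin α).symm

def lstOf (σ : Perm α) : List α := List.ofFn (fun i => σ (baseE i))

lemma lstOf_nodup (σ : Perm α) : (lstOf (α := α) σ).Nodup :=
  List.nodup_ofFn.mpr (σ.injective.comp (baseE).injective)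

lemma lstOf_injective : Function.Injective (lstOf (α := α)) := by
  intro σ σ' h
  apply Equiv.ext
  intro z
  have h2 : ∀ i : Fin (Fintype.card α), σ (baseE i) = σ' (baseE i) := by
    intro i
    have h3 := congrArg (fun l : List α => l[(i : ℕ)]?) h
    simpa [lstOf, List.getElem?_ofFn, i.isLt] using h3
  have := h2 (baseE.symm z)
  simpa using this

/-- index of `z` on the list of `σ` -/
def posOf (σ : Perm α) (z : α) : ℕ := (baseE.symm (σ⁻¹ z) : ℕ)

lemma posOf_lt (σ : Perm α) (z : α) : posOf σ z < Fintype.card α :=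
  (baseE.symm (σ⁻¹ z)).2

lemma posOf_mul (π σ : Perm α) (z : α) : posOf (π * σ) z = posOf σ (π⁻¹ z) := by
  simp [posOf, mul_inv_rev]

lemma posOf_inj {σ : Perm α} {z z' : α} (h : posOf σ z = posOf σ z') : z = z' := by
  have := baseE.symm.injective (Fin.ext h : baseE.symm (σ⁻¹ z) = baseE.symm (σ⁻¹ z'))
  exact σ⁻¹.injective this

lemma get?_lstOf (σ : Perm α) (z : α) : (lstOf σ)[posOf σ z]? = some z := by
  rw [List.getElem?_eq_some_iff]
  refine ⟨by simpa [lstOf] using posOf_lt σ z, ?_⟩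
  simp [lstOf, posOf]

variable (u v w : α)

/-- the pattern `[u,v,w]` appears on the list of `σ` whenever positions increase -/
lemma pat_of_pos (σ : Perm α) (h1 : posOf σ u < posOf σ v) (h2 : posOf σ v < posOf σ w) :
    [u, v, w] <+ lstOf σ :=
  triple_sublist h1 h2 (get?_lstOf σ u) (get?_lstOf σ v) (get?_lstOf σ w)

/-- correcting permutations -/
def decP (t : Fin 6) : Perm α :=
  if t = 0 then 1 else if t = 1 then Equiv.swap v w else if t = 2 then Equiv.swap u v
  else if t = 3 then Equiv.swap v w * Equiv.swap u v
  else if t = 4 then Equiv.swap v w * Equiv.swap u w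
  else Equiv.swap u w

/-- selecting the correcting permutation -/
def tsel (σ : Perm α) : Fin 6 :=
  if posOf σ u < posOf σ v then
    (if posOf σ v < posOf σ w then 0 else if posOf σ u < posOf σ w then 1 else 4)
  else
    (if posOf σ v < posOf σ w then (if posOf σ u < posOf σ w then 2 else 3) else 5)

variable {u v w}

lemma good_fix (huv : u ≠ v) (huw : u ≠ w) (hvw : v ≠ w) (σ : Perm α) :
    posOf (decP u v w (tsel u v w σ) * σ) u < posOf (decP u v w (tsel u v w σ) * σ) v ∧
    posOf (decP u v w (tsel u v w σ) * σ) v < posOf (decP u v w (tsel u v w σ) * σ) w := by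
  have duv : posOf σ u ≠ posOf σ v := fun h => huv (posOf_inj h)
  have duw : posOf σ u ≠ posOf σ w := fun h => huw (posOf_inj h)
  have dvw : posOf σ v ≠ posOf σ w := fun h => hvw (posOf_inj h)
  unfold tsel
  split_ifs with h1 h2 h3 h2 h3 <;>
  [ (rw [show decP u v w 0 = 1 by simp [decP]]);
    (rw [show decP u v w 1 = Equiv.swap v w by simp [decP]]);
    (rw [show decP u v w 4 = Equiv.swap v w * Equiv.swap u w by simp [decP]]);
    (rw [show decP u v w 2 = Equiv.swap u v by simp [decP]]);
    (rw [show decP u v w 3 = Equiv.swap v w * Equiv.swap u v by simp [decP]]);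
    (rw [show decP u v w 5 = Equiv.swap u w by simp [decP]])] <;>
  simp only [one_mul, posOf_mul, mul_inv_rev, Equiv.swap_inv, Equiv.Perm.mul_apply,
    inv_one, Equiv.Perm.one_apply,
    Equiv.swap_apply_left, Equiv.swap_apply_right,
    Equiv.swap_apply_of_ne_of_ne huv huw, Equiv.swap_apply_of_ne_of_ne huv.symm hvw,
    Equiv.swap_apply_of_ne_of_ne huw.symm hvw.symm] <;>
  omega

/-- the canonicalization map -/
def theta (huv : u ≠ v) (huw : u ≠ w) (hvw : v ≠ w) (σ : Perm α) :
    {l : PrefList α // [u, v, w].Sublist l.val} × Fin 6 :=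
  (⟨⟨lstOf (decP u v w (tsel u v w σ) * σ), lstOf_nodup _⟩,
      pat_of_pos u v w _ (good_fix huv huw hvw σ).1 (good_fix huv huw hvw σ).2⟩,
    tsel u v w σ)

lemma theta_injective (huv : u ≠ v) (huw : u ≠ w) (hvw : v ≠ w) :
    Function.Injective (theta (α := α) huv huw hvw) := by
  intro σ σ' h
  have h2 : tsel u v w σ = tsel u v w σ' := congrArg Prod.snd h
  have h1 : lstOf (decP u v w (tsel u v w σ) * σ)
      = lstOf (decP u v w (tsel u v w σ') * σ') := by
    have := congrArg (fun z => (Prod.fst z).val.val) h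
    exact this
  rw [← h2] at h1
  have h3 := lstOf_injective h1
  exact mul_left_cancel h3

lemma factorial_le_six_good (huv : u ≠ v) (huw : u ≠ w) (hvw : v ≠ w) :
    (Fintype.card α).factorial ≤
      6 * Nat.card {l : PrefList α // [u, v, w].Sublist l.val} := by
  rw [Nat.card_eq_fintype_card]
  have h := Fintype.card_le_of_injective _ (theta_injective (α := α) huv huw hvw)
  rw [Fintype.card_prod, Fintype.card_fin, Fintype.card_perm] at h
  omega

end good
end AuxOSP
namespace AuxOSP
open Classical List Filter

noncomputable section main
set_option linter.unusedSectionVars false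
set_option maxHeartbeats 1000000

variable {M W : Type} [Fintype M] [Fintype W]

instance : Nonempty (PrefList M) := ⟨⟨[], List.nodup_nil⟩⟩

lemma nat_card_subtype_or {β : Type} [Finite β] (p q : β → Prop) :
    Nat.card {x : β // p x ∨ q x} ≤ Nat.card {x // p x} + Nat.card {x // q x} := by
  classical
  cases nonempty_fintype β
  simp only [Nat.card_eq_fintype_card]
  exact Fintype.card_subtype_or _ _

lemma card_le_sum_selector {β ι : Type} [Finite β] [Fintype ι] (Q : β → Prop)
    (P : ι → β → Prop) (hsel : ∀ b, Q b → ∃ i, P i b) :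
    Nat.card {b : β // Q b} ≤ ∑ i : ι, Nat.card {b : β // P i b} := by
  classical
  cases nonempty_fintype β
  choose sel hP using fun q : {b : β // Q b} => hsel q.1 q.2
  have hinj : Function.Injective (fun q : {b : β // Q b} =>
      (⟨sel q, ⟨q.1, hP q⟩⟩ : Σ i : ι, {b : β // P i b})) := by
    intro q q' h
    apply Subtype.ext
    exact congrArg (fun z : Σ i : ι, {b : β // P i b} => z.2.val) h
  have hc := Nat.card_le_card_of_injective _ hinj
  refine le_trans hc (le_of_eq ?_)
  rw [Nat.card_eq_fintype_card, Fintype.card_sigma]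
  exact Finset.sum_congr rfl (fun i _ => (Nat.card_eq_fintype_card).symm)

lemma bad_mul (u v w : M) (huv : u ≠ v) (huw : u ≠ w) (hvw : v ≠ w)
    (hM : 1 ≤ Fintype.card M) :
    18 * Nat.card {l : PrefList M // ¬ [u,v,w].Sublist l.val}
      ≤ 17 * Fintype.card (PrefList M) := by
  classical
  have hG := factorial_le_six_good (α := M) huv huw hvw
  have hL := card_preflist_le (α := M) hM
  rw [Nat.card_eq_fintype_card] at hG ⊢
  have hcompl : Fintype.card {l : PrefList M // ¬ [u,v,w].Sublist l.val}
      = Fintype.card (PrefList M) - Fintype.card {l : PrefList M // [u,v,w].Sublist l.val} :=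
    Fintype.card_subtype_compl _
  have hle : Fintype.card {l : PrefList M // [u,v,w].Sublist l.val}
      ≤ Fintype.card (PrefList M) := Fintype.card_subtype_le _
  omega

lemma count_restrict (T : Finset W) (p : PrefList M → Prop) :
    Nat.card {qbar : W → PrefList M // ∀ x ∈ T, p (qbar x)}
      ≤ Nat.card {l : PrefList M // p l} ^ T.card *
        Fintype.card (PrefList M) ^ (Fintype.card W - T.card) := by
  classical
  rw [Nat.card_eq_fintype_card, Nat.card_eq_fintype_card]
  have hinj : Function.Injective
      (fun q : {qbar : W → PrefList M // ∀ x ∈ T, p (qbar x)} =>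
        ((fun x : {z : W // z ∈ T} => (⟨q.val x.val, q.prop x.val x.prop⟩ : {l // p l})),
         (fun x : {z : W // z ∈ Tᶜ} => q.val x.val))) := by
    intro q q' h
    have h1 := congrArg Prod.fst h
    have h2 := congrArg Prod.snd h
    apply Subtype.ext
    funext z
    by_cases hz : z ∈ T
    · have := congrFun h1 ⟨z, hz⟩
      exact congrArg Subtype.val this
    · exact congrFun h2 ⟨z, Finset.mem_compl.mpr hz⟩
  have hc := Fintype.card_le_of_injective _ hinj
  rwa [Fintype.card_prod, Fintype.card_fun, Fintype.card_fun, Fintype.card_coe,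
    Fintype.card_coe, Finset.card_compl] at hc

lemma count_restrict_real (T : Finset W) (u v w : M) (huv : u ≠ v) (huw : u ≠ w)
    (hvw : v ≠ w) (hM : 1 ≤ Fintype.card M) :
    (Nat.card {qbar : W → PrefList M // ∀ x ∈ T, ¬ [u,v,w].Sublist (qbar x).val} : ℝ)
      ≤ (17/18) ^ T.card * (Fintype.card (PrefList M) : ℝ) ^ (Fintype.card W) := by
  classical
  have h1 := count_restrict T (fun l : PrefList M => ¬ [u,v,w].Sublist l.val)
  have h2 := bad_mul u v w huv huw hvw hM
  have hTn : T.card ≤ Fintype.card W := T.card_le_univ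
  have hK : (Nat.card {l : PrefList M // ¬ [u,v,w].Sublist l.val} : ℝ)
      ≤ (17/18) * (Fintype.card (PrefList M) : ℝ) := by
    have h3 : (18:ℝ) * (Nat.card {l : PrefList M // ¬ [u,v,w].Sublist l.val} : ℝ)
        ≤ 17 * (Fintype.card (PrefList M) : ℝ) := by exact_mod_cast h2
    linarith
  calc (Nat.card {qbar : W → PrefList M // ∀ x ∈ T, ¬ [u,v,w].Sublist (qbar x).val} : ℝ)
      ≤ (Nat.card {l : PrefList M // ¬ [u,v,w].Sublist l.val} : ℝ) ^ T.card *
        (Fintype.card (PrefList M) : ℝ) ^ (Fintype.card W - T.card) := by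
        exact_mod_cast h1
    _ ≤ ((17/18) * (Fintype.card (PrefList M) : ℝ)) ^ T.card *
        (Fintype.card (PrefList M) : ℝ) ^ (Fintype.card W - T.card) := by
        apply mul_le_mul_of_nonneg_right (pow_le_pow_left₀ (by positivity) hK _)
        positivity
    _ = (17/18) ^ T.card * ((Fintype.card (PrefList M) : ℝ) ^ T.card *
        (Fintype.card (PrefList M) : ℝ) ^ (Fintype.card W - T.card)) := by
        rw [mul_pow]; ring
    _ = (17/18) ^ T.card * (Fintype.card (PrefList M) : ℝ) ^ (Fintype.card W) := by
        rw [← pow_add, Nat.add_sub_cancel' hTn]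

end main
end AuxOSP

set_option maxHeartbeats 3000000 in
/-- For `qbar` drawn uniformly at random from `P(M)^W`, for every
`d : ℕ` and every `ε > 0` there is `N` such that whenever `|M| ≥ 3`, `|W| ≥ N` and
`|M| ≤ |W| ^ d`, the probability that some `qbar`-stable matching mechanism is OSP
for more than two men is less than `ε`. -/
theorem random_market_no_stable_mech_OSP_for_three_men :
    ∀ (d : ℕ) (ε : ℝ), 0 < ε → ∃ N : ℕ,
      ∀ (M W : Type) [Fintype M] [Fintype W],
        3 ≤ Fintype.card M → N ≤ Fintype.card W →
        Fintype.card M ≤ Fintype.card W ^ d →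
        (Nat.card {qbar : W → PrefList M //
            ∃ I : Mech M W, IsStableRule qbar I.run ∧
              ∃ a b c : M, a ≠ b ∧ a ≠ c ∧ b ≠ c ∧
                I.OSPFor a ∧ I.OSPFor b ∧ I.OSPFor c} : ℝ) /
          (Nat.card (W → PrefList M) : ℝ) < ε := by
  classical
  intro d ε hε
  set s : ℝ := Real.sqrt (17/18) with hs
  have hs0 : 0 < s := Real.sqrt_pos.mpr (by norm_num)
  have hs1 : s < 1 := by
    rw [hs, show (1:ℝ) = Real.sqrt 1 by simp]
    exact Real.sqrt_lt_sqrt (by norm_num) (by norm_num)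
  have hsq : s ^ 2 = 17/18 := Real.sq_sqrt (by norm_num)
  have hsum : Summable (fun n : ℕ => (n:ℝ) ^ (3*d) * s ^ n) :=
    summable_pow_mul_geometric_of_norm_lt_one (3*d)
      (by rwa [Real.norm_eq_abs, abs_of_pos hs0])
  have hten := hsum.tendsto_atTop_zero
  have hev : ∀ᶠ n : ℕ in Filter.atTop, (n:ℝ) ^ (3*d) * s ^ n < ε * s / 2 :=
    Filter.Tendsto.eventually_lt_const (by positivity : (0:ℝ) < ε * s / 2) hten
  obtain ⟨N₀, hN₀⟩ := Filter.eventually_atTop.mp hev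
  refine ⟨N₀ + 2, ?_⟩
  intro M W _ _ hM3 hNW hMW
  classical
  set L := Fintype.card (PrefList M) with hL
  set n := Fintype.card W with hn
  set m := Fintype.card M with hm
  have hm1 : 1 ≤ m := by omega
  have hL1 : 1 ≤ L := by rw [hL]; exact Fintype.card_pos
  have hLpos : (0:ℝ) < (L:ℝ) ^ n := by positivity
  have harith1 : n / 2 ≤ n - n / 2 := by omega
  have harith2 : n - 1 ≤ 2 * (n / 2) := by omega
  have harith3 : n - 1 + 1 = n := by omega
  have harith4 : N₀ ≤ n := by omega
  obtain ⟨W1, -, hW1card⟩ := Finset.exists_subset_card_eq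
    (s := (Finset.univ : Finset W)) (n := n / 2)
    (by rw [Finset.card_univ, ← hn]; omega)
  have hsel : ∀ qbar : W → PrefList M,
      (∃ I : Mech M W, IsStableRule qbar I.run ∧
        ∃ a b c : M, a ≠ b ∧ a ≠ c ∧ b ≠ c ∧
          I.OSPFor a ∧ I.OSPFor b ∧ I.OSPFor c) →
      ∃ t : {t : M × M × M // t.1 ≠ t.2.1 ∧ t.1 ≠ t.2.2 ∧ t.2.1 ≠ t.2.2},
        ((∀ x ∈ W1, ¬ [t.val.1, t.val.2.1, t.val.2.2].Sublist (qbar x).val) ∨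
         (∀ y ∈ W1ᶜ, ¬ [t.val.2.2, t.val.2.1, t.val.1].Sublist (qbar y).val)) := by
    rintro qbar ⟨I, hst, a, b, c, hab, hac, hbc, ha, hb, hc⟩
    refine ⟨⟨(a, b, c), hab, hac, hbc⟩, ?_⟩
    by_contra hnp
    obtain ⟨h1, h2⟩ := not_or.mp hnp
    push_neg at h1 h2
    obtain ⟨x, hxW, hxpat⟩ := h1
    obtain ⟨y, hyW, hypat⟩ := h2
    have hxy : x ≠ y := fun h => (Finset.mem_compl.mp hyW) (h ▸ hxW)
    exact AuxOSP.keyLemma hab hac hbc hxy hxpat hypat ⟨I, hst, ha, hb, hc⟩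
  have hcard1 := AuxOSP.card_le_sum_selector
    (β := W → PrefList M)
    (ι := {t : M × M × M // t.1 ≠ t.2.1 ∧ t.1 ≠ t.2.2 ∧ t.2.1 ≠ t.2.2})
    (fun qbar => ∃ I : Mech M W, IsStableRule qbar I.run ∧
        ∃ a b c : M, a ≠ b ∧ a ≠ c ∧ b ≠ c ∧
          I.OSPFor a ∧ I.OSPFor b ∧ I.OSPFor c)
    (fun t qbar =>
      (∀ x ∈ W1, ¬ [t.val.1, t.val.2.1, t.val.2.2].Sublist (qbar x).val) ∨
      (∀ y ∈ W1ᶜ, ¬ [t.val.2.2, t.val.2.1, t.val.1].Sublist (qbar y).val))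
    hsel
  have hW1c : W1ᶜ.card = n - n / 2 := by
    rw [Finset.card_compl, hW1card, hn]
  -- real bound for each triple
  have hperT : ∀ t : {t : M × M × M // t.1 ≠ t.2.1 ∧ t.1 ≠ t.2.2 ∧ t.2.1 ≠ t.2.2},
      (Nat.card {qbar : W → PrefList M //
        (∀ x ∈ W1, ¬ [t.val.1, t.val.2.1, t.val.2.2].Sublist (qbar x).val) ∨
        (∀ y ∈ W1ᶜ, ¬ [t.val.2.2, t.val.2.1, t.val.1].Sublist (qbar y).val)} : ℝ)
        ≤ 2 * (17/18) ^ (n / 2) * (L:ℝ) ^ n := by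
    rintro ⟨⟨a, b, c⟩, hab, hac, hbc⟩
    have hor := AuxOSP.nat_card_subtype_or
      (fun qbar : W → PrefList M => ∀ x ∈ W1, ¬ [a, b, c].Sublist (qbar x).val)
      (fun qbar : W → PrefList M => ∀ y ∈ W1ᶜ, ¬ [c, b, a].Sublist (qbar y).val)
    have hA := AuxOSP.count_restrict_real W1 a b c hab hac hbc hm1
    have hB := AuxOSP.count_restrict_real W1ᶜ c b a hbc.symm hac.symm hab.symm hm1
    rw [hW1card] at hA
    rw [hW1c] at hB
    have hBB : (Nat.card
        {qbar : W → PrefList M // ∀ y ∈ W1ᶜ, ¬ [c, b, a].Sublist (qbar y).val} : ℝ)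
        ≤ (17/18) ^ (n / 2) * (L:ℝ) ^ n := by
      refine le_trans hB ?_
      refine mul_le_mul_of_nonneg_right ?_ (by positivity)
      exact pow_le_pow_of_le_one (by norm_num) (by norm_num) harith1
    have hcast : (Nat.card {qbar : W → PrefList M //
        (∀ x ∈ W1, ¬ [a, b, c].Sublist (qbar x).val) ∨
        (∀ y ∈ W1ᶜ, ¬ [c, b, a].Sublist (qbar y).val)} : ℝ)
        ≤ (Nat.card
            {qbar : W → PrefList M // ∀ x ∈ W1, ¬ [a, b, c].Sublist (qbar x).val} : ℝ) +
          (Nat.card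
            {qbar : W → PrefList M // ∀ y ∈ W1ᶜ, ¬ [c, b, a].Sublist (qbar y).val} : ℝ) := by
      exact_mod_cast hor
    calc (Nat.card {qbar : W → PrefList M //
        (∀ x ∈ W1, ¬ [a, b, c].Sublist (qbar x).val) ∨
        (∀ y ∈ W1ᶜ, ¬ [c, b, a].Sublist (qbar y).val)} : ℝ)
        ≤ _ + _ := hcast
      _ ≤ (17/18) ^ (n / 2) * (L:ℝ) ^ n + (17/18) ^ (n / 2) * (L:ℝ) ^ n :=
          add_le_add hA hBB
      _ = 2 * (17/18) ^ (n / 2) * (L:ℝ) ^ n := by ring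
  have hTrip : (Fintype.card
      {t : M × M × M // t.1 ≠ t.2.1 ∧ t.1 ≠ t.2.2 ∧ t.2.1 ≠ t.2.2} : ℝ) ≤ (m:ℝ) ^ 3 := by
    have h1 : Fintype.card {t : M × M × M // t.1 ≠ t.2.1 ∧ t.1 ≠ t.2.2 ∧ t.2.1 ≠ t.2.2}
        ≤ Fintype.card (M × M × M) := Fintype.card_subtype_le _
    have h2 : Fintype.card (M × M × M) = m ^ 3 := by
      rw [Fintype.card_prod, Fintype.card_prod, ← hm]; ring
    rw [h2] at h1
    exact_mod_cast h1
  have hmain : (Nat.card {qbar : W → PrefList M //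
      ∃ I : Mech M W, IsStableRule qbar I.run ∧
        ∃ a b c : M, a ≠ b ∧ a ≠ c ∧ b ≠ c ∧
          I.OSPFor a ∧ I.OSPFor b ∧ I.OSPFor c} : ℝ)
      ≤ (m:ℝ)^3 * (2 * (17/18) ^ (n / 2)) * (L:ℝ) ^ n := by
    have h1 : (Nat.card {qbar : W → PrefList M //
        ∃ I : Mech M W, IsStableRule qbar I.run ∧
          ∃ a b c : M, a ≠ b ∧ a ≠ c ∧ b ≠ c ∧
            I.OSPFor a ∧ I.OSPFor b ∧ I.OSPFor c} : ℝ)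
        ≤ ∑ t : {t : M × M × M // t.1 ≠ t.2.1 ∧ t.1 ≠ t.2.2 ∧ t.2.1 ≠ t.2.2},
            (Nat.card {qbar : W → PrefList M //
              (∀ x ∈ W1, ¬ [t.val.1, t.val.2.1, t.val.2.2].Sublist (qbar x).val) ∨
              (∀ y ∈ W1ᶜ, ¬ [t.val.2.2, t.val.2.1, t.val.1].Sublist (qbar y).val)} : ℝ) := by
      exact_mod_cast hcard1
    have h2 : ∑ t : {t : M × M × M // t.1 ≠ t.2.1 ∧ t.1 ≠ t.2.2 ∧ t.2.1 ≠ t.2.2},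
        (Nat.card {qbar : W → PrefList M //
          (∀ x ∈ W1, ¬ [t.val.1, t.val.2.1, t.val.2.2].Sublist (qbar x).val) ∨
          (∀ y ∈ W1ᶜ, ¬ [t.val.2.2, t.val.2.1, t.val.1].Sublist (qbar y).val)} : ℝ)
        ≤ (Fintype.card {t : M × M × M // t.1 ≠ t.2.1 ∧ t.1 ≠ t.2.2 ∧ t.2.1 ≠ t.2.2} : ℝ)
          * (2 * (17/18) ^ (n / 2) * (L:ℝ) ^ n) := by
      have h3 := Finset.sum_le_card_nsmul Finset.univ
        (fun t : {t : M × M × M // t.1 ≠ t.2.1 ∧ t.1 ≠ t.2.2 ∧ t.2.1 ≠ t.2.2} =>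
          (Nat.card {qbar : W → PrefList M //
            (∀ x ∈ W1, ¬ [t.val.1, t.val.2.1, t.val.2.2].Sublist (qbar x).val) ∨
            (∀ y ∈ W1ᶜ, ¬ [t.val.2.2, t.val.2.1, t.val.1].Sublist (qbar y).val)} : ℝ))
        (2 * (17/18) ^ (n / 2) * (L:ℝ) ^ n) (fun t _ => hperT t)
      rw [Finset.card_univ, nsmul_eq_mul] at h3
      exact h3
    refine le_trans h1 (le_trans h2 ?_)
    calc (Fintype.card {t : M × M × M // t.1 ≠ t.2.1 ∧ t.1 ≠ t.2.2 ∧ t.2.1 ≠ t.2.2} : ℝ)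
          * (2 * (17/18) ^ (n / 2) * (L:ℝ) ^ n)
        ≤ (m:ℝ)^3 * (2 * (17/18) ^ (n / 2) * (L:ℝ) ^ n) :=
          mul_le_mul_of_nonneg_right hTrip (by positivity)
      _ = (m:ℝ)^3 * (2 * (17/18) ^ (n / 2)) * (L:ℝ) ^ n := by ring
  have hcoef : (m:ℝ)^3 * (2 * (17/18) ^ (n / 2)) < ε := by
    have hm3 : (m:ℝ)^3 ≤ (n:ℝ) ^ (3*d) := by
      have h1 : (m:ℝ) ≤ ((n:ℝ)^d) := by exact_mod_cast hMW
      calc (m:ℝ)^3 ≤ ((n:ℝ)^d)^3 := pow_le_pow_left₀ (by positivity) h1 3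
        _ = (n:ℝ)^(3*d) := by rw [← pow_mul, Nat.mul_comm]
    have hpow : (17/18:ℝ) ^ (n / 2) ≤ s ^ (n - 1) := by
      rw [← hsq, ← pow_mul]
      exact pow_le_pow_of_le_one hs0.le hs1.le harith2
    have hsn : s ^ (n - 1) = s ^ n / s := by
      rw [eq_div_iff hs0.ne', ← pow_succ, harith3]
    have hNn := hN₀ n harith4
    have hnn : (0:ℝ) ≤ (n:ℝ)^(3*d) := by positivity
    calc (m:ℝ)^3 * (2 * (17/18) ^ (n / 2))
        ≤ (n:ℝ)^(3*d) * (2 * (s ^ n / s)) := by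
          apply mul_le_mul hm3 _ (by positivity) hnn
          rw [← hsn]
          exact mul_le_mul_of_nonneg_left hpow (by norm_num)
      _ = 2 / s * ((n:ℝ)^(3*d) * s ^ n) := by ring
      _ < 2 / s * (ε * s / 2) := by
          exact mul_lt_mul_of_pos_left hNn (by positivity)
      _ = ε := by field_simp
  have hden : (Nat.card (W → PrefList M) : ℝ) = (L:ℝ) ^ n := by
    rw [Nat.card_eq_fintype_card, Fintype.card_fun, ← hL, ← hn]
    push_cast
    ring
  rw [hden, div_lt_iff₀ hLpos]
  exact lt_of_le_of_lt hmain (mul_lt_mul_of_pos_right hcoef hLpos)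
end

section
/- For every subset M' ⊆ M of men, the following are equivalent: (i) there exists a stable two-sides-querying matching mechanism that is OSP for every man in M'; (ii) for every preference profile q̄ ∈ P(M)^W for the women over the men, there exists a q̄-stable one-side-querying matching mechanism that is OSP for every man in M'. -/
section Aux

variable {M W : Type}

/-- The everywhere-unmatched matching. -/
private def mnull : Matching M W :=
  ⟨fun _ => none, fun m m' w h _ => by simp at h⟩

/-- The empty preference list. -/
private def dfl {α : Type} : PrefList α := ⟨[], List.nodup_nil⟩

open Classical in
/-- Prune a two-sides-querying mechanism to a one-side-querying mechanism, answering
women's queries with `qbar`.  At each man node we re-ask the man a second time, routing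
by the same fiber, with a recognizable "tag" subtree on the (unreachable) mismatching
branches; this makes the routing fibers of the pruned tree recoverable. -/
private noncomputable def prune (qbar : W → PrefList M) : Mech2 M W → Mech M W
  | .leaf μ => .leaf μ
  | .nodeM q next => .node q (fun p => .node q (fun p' =>
      if next p' = next p then prune qbar (next p)
      else .node q fun _ => .leaf mnull))
  | .nodeW w next => prune qbar (next (qbar w))

private lemma prune_ne_tag (qbar : W → PrefList M) (t : Mech2 M W) (q' : M) :
    prune qbar t ≠ .node q' fun _ => .leaf mnull := by
  induction t with
  | leaf μ => rw [prune]; exact fun h => nomatch h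
  | nodeM q next ih =>
      rw [prune]
      intro h
      obtain ⟨-, h2⟩ := (Mech.node.injEq _ _ _ _).mp h
      exact nomatch (congrFun h2 dfl)
  | nodeW w next ih => rw [prune]; exact ih (qbar w)

private lemma prune_run (qbar : W → PrefList M) (t : Mech2 M W) (pbar : M → PrefList W) :
    (prune qbar t).run pbar = t.run pbar qbar := by
  induction t with
  | leaf μ => rfl
  | nodeM q next ih =>
      rw [prune]
      show (Mech.node q _).run pbar = (next (pbar q)).run pbar qbar
      rw [Mech.run, Mech.run, if_pos rfl]
      exact ih (pbar q)
  | nodeW w next ih => rw [prune]; exact ih (qbar w)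

private lemma ospaux_of_empty (m : M) :
    ∀ (t : Mech M W) (P : Set (M → PrefList W)), (∀ pbar, pbar ∉ P) → Mech.OSPAux m t P := by
  intro t
  induction t with
  | leaf μ => intro _ _; trivial
  | node q next ih =>
      intro P hP
      refine ⟨?_, ?_⟩
      · exact fun _ pbar hpbar => (hP pbar hpbar).elim
      · exact fun p => ih p _ (fun pbar hpbar => hP pbar hpbar.1)

private lemma prune_ospaux (qbar : W → PrefList M) (m : M) :
    ∀ (t : Mech2 M W) (P2 : Set ((M → PrefList W) × (W → PrefList M)))
      (Q : Set (M → PrefList W)),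
      Mech2.OSPAux m t P2 → (∀ pbar ∈ Q, (pbar, qbar) ∈ P2) →
      Mech.OSPAux m (prune qbar t) Q := by
  intro t
  induction t with
  | leaf μ => intro _ _ _ _; trivial
  | nodeW w next ih =>
      intro P2 Q h hQ
      rw [prune]
      exact ih (qbar w) _ Q (h (qbar w)) (fun pbar hp => ⟨hQ pbar hp, rfl⟩)
  | nodeM q next ih =>
      intro P2 Q h hQ
      classical
      rw [prune]
      set C : PrefList W → Mech M W := fun p => Mech.node q (fun p' =>
        if next p' = next p then prune qbar (next p)
        else Mech.node q fun _ => Mech.leaf mnull) with hC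
      have key1 : ∀ x y, next x = next y → C x = C y := by
        intro x y hxy; rw [hC]; simp only [hxy]
      have key2 : ∀ x y, C x = C y → next x = next y := by
        intro x y hCeq
        by_contra hne
        obtain ⟨-, h2⟩ := (Mech.node.injEq _ _ _ _).mp hCeq
        have hx := congrFun h2 x
        rw [if_pos rfl, if_neg hne] at hx
        exact prune_ne_tag qbar (next x) q hx
      have Crun : ∀ (pb : M → PrefList W),
          (C (pb q)).run pb = (next (pb q)).run pb qbar := by
        intro pb
        show (Mech.node q fun p' =>
          if next p' = next (pb q) then prune qbar (next (pb q))
          else Mech.node q fun _ => Mech.leaf mnull).run pb = _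
        simp only [Mech.run]
        rw [if_pos trivial]
        exact prune_run qbar (next (pb q)) pb
      refine ⟨?_, ?_⟩
      · intro hq pbar hp pbar' hp' hne
        subst hq
        have hnn : next (pbar q) ≠ next (pbar' q) := fun e => hne (key1 _ _ e)
        have h1 := h.1 rfl (pbar, qbar) (hQ _ hp) (pbar', qbar) (hQ _ hp') hnn
        rw [Crun pbar', Crun pbar]
        exact h1
      · intro p
        have hQp : ∀ pbar, pbar ∈ {pbar ∈ Q | C (pbar q) = C p} → next (pbar q) = next p :=
          fun pbar hp => key2 _ _ hp.2
        refine ⟨?_, ?_⟩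
        · intro hq pbar hp pbar' hp' hne
          subst hq
          refine (hne ?_).elim
          show (if next (pbar q) = next p then prune qbar (next p)
              else Mech.node q fun _ => Mech.leaf mnull)
            = (if next (pbar' q) = next p then prune qbar (next p)
              else Mech.node q fun _ => Mech.leaf mnull)
          rw [if_pos (hQp pbar hp), if_pos (hQp pbar' hp')]
        · intro p'
          by_cases hpp : next p' = next p
          · have e1 : (fun p' => if next p' = next p then prune qbar (next p)
                else Mech.node q fun _ => Mech.leaf mnull) p' = prune qbar (next p) := by
              show (if next p' = next p then _ else _) = _
              rw [if_pos hpp]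
            rw [e1]
            refine ih p {r ∈ P2 | next (r.1 q) = next p} _ (h.2 p) ?_
            intro pbar hp
            exact ⟨hQ pbar hp.1.1, hQp pbar hp.1⟩
          · apply ospaux_of_empty
            intro pbar hp
            have h2 := hp.2
            have h3 : prune qbar (next p) = Mech.node q fun _ => Mech.leaf mnull := by
              have h4 : (if next (pbar q) = next p then prune qbar (next p)
                    else Mech.node q fun _ => Mech.leaf mnull)
                  = (if next p' = next p then prune qbar (next p)
                    else Mech.node q fun _ => Mech.leaf mnull) := h2
              rwa [if_pos (hQp pbar hp.1), if_neg hpp] at h4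
            exact prune_ne_tag qbar (next p) q h3

/-- Embed a one-side-querying mechanism as a two-sides-querying one. -/
private def embed : Mech M W → Mech2 M W
  | .leaf μ => .leaf μ
  | .node q next => .nodeM q (fun p => embed (next p))

private lemma embed_run (J : Mech M W) (pbar : M → PrefList W) (qbar : W → PrefList M) :
    (embed J).run pbar qbar = J.run pbar := by
  induction J with
  | leaf μ => rfl
  | node q next ih => rw [embed]; exact ih (pbar q)

private lemma embed_inj : ∀ {J J' : Mech M W}, embed J = embed J' → J = J' := by
  intro J
  induction J with
  | leaf μ =>
      intro J' h
      cases J' with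
      | leaf μ' => rw [embed, embed] at h; injection h with h; rw [h]
      | node q next => rw [embed, embed] at h; exact nomatch h
  | node q next ih =>
      intro J' h
      cases J' with
      | leaf μ' => rw [embed, embed] at h; exact nomatch h
      | node q' next' =>
          rw [embed, embed] at h
          obtain ⟨rfl, h2⟩ := (Mech2.nodeM.injEq _ _ _ _).mp h
          have : next = next' := funext fun p => ih p (congrFun h2 p)
          rw [this]

private lemma embed_ospaux (m : M) :
    ∀ (J : Mech M W) (Q : Set (M → PrefList W))
      (P2 : Set ((M → PrefList W) × (W → PrefList M))),
      Mech.OSPAux m J Q → (∀ r ∈ P2, r.1 ∈ Q) → Mech2.OSPAux m (embed J) P2 := by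
  intro J
  induction J with
  | leaf μ => intro _ _ _ _; rw [embed]; trivial
  | node q next ih =>
      intro Q P2 h hP
      rw [embed]
      refine ⟨?_, ?_⟩
      · intro hq r hr r' hr' hne
        have hnn : next (r.1 m) ≠ next (r'.1 m) :=
          fun e => hne (congrArg embed e)
        have h1 := h.1 hq r.1 (hP r hr) r'.1 (hP r' hr') hnn
        rw [embed_run, embed_run]
        exact h1
      · intro p
        refine ih p {pbar ∈ Q | next (pbar q) = next p} _ (h.2 p) ?_
        intro r hr
        exact ⟨hP r hr.1, embed_inj hr.2⟩

open Classical in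
/-- Query the women on the list one by one, recording answers into `acc`, then run the
one-side-querying mechanism chosen for the resulting women's profile. -/
private noncomputable def buildW (F : (W → PrefList M) → Mech M W) :
    List W → (W → PrefList M) → Mech2 M W
  | [], acc => embed (F acc)
  | w :: rest, acc => .nodeW w (fun p => buildW F rest (fun w' => if w' = w then p else acc w'))

open Classical in
private lemma buildW_run (F : (W → PrefList M) → Mech M W) (pbar : M → PrefList W)
    (qbar : W → PrefList M) :
    ∀ (ws : List W) (acc : W → PrefList M),
      (buildW F ws acc).run pbar qbar
        = (F (fun w => if w ∈ ws then qbar w else acc w)).run pbar := by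
  intro ws
  induction ws with
  | nil =>
      intro acc
      rw [buildW, embed_run]
      have : (fun w => if w ∈ ([] : List W) then qbar w else acc w) = acc := by
        funext w; simp
      rw [this]
  | cons w rest ih =>
      intro acc
      rw [buildW]
      show (buildW F rest (fun w' => if w' = w then qbar w else acc w')).run pbar qbar = _
      rw [ih]
      have : (fun w' => if w' ∈ rest then qbar w' else if w' = w then qbar w else acc w')
          = (fun w' => if w' ∈ w :: rest then qbar w' else acc w') := by
        funext w'
        by_cases h1 : w' ∈ rest
        · rw [if_pos h1, if_pos (List.mem_cons_of_mem w h1)]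
        · rw [if_neg h1]
          by_cases h2 : w' = w
          · rw [if_pos h2, if_pos (by rw [h2]; exact List.mem_cons_self), h2]
          · rw [if_neg h2, if_neg (by simp [h1, h2])]
      rw [this]

private lemma buildW_ospaux (F : (W → PrefList M) → Mech M W) (m : M)
    (hF : ∀ qb, Mech.OSPAux m (F qb) Set.univ) :
    ∀ (ws : List W) (acc : W → PrefList M)
      (P2 : Set ((M → PrefList W) × (W → PrefList M))),
      Mech2.OSPAux m (buildW F ws acc) P2 := by
  intro ws
  induction ws with
  | nil =>
      intro acc P2
      rw [buildW]
      exact embed_ospaux m (F acc) Set.univ P2 (hF acc) (fun _ _ => trivial)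
  | cons w rest ih =>
      intro acc P2
      rw [buildW]
      intro p
      exact ih _ _

end Aux

/-- For every subset `M'` of the men, there exists a stable
two-sides-querying matching mechanism that is OSP for every man in `M'` if and only
if for every women's profile `qbar` there exists a `qbar`-stable one-side-querying
matching mechanism that is OSP for every man in `M'`. -/
theorem two_sided_osp_iff_one_sided_osp
    {M W : Type} [Fintype M] [Fintype W] (M' : Set M) :
    (∃ I : Mech2 M W,
        (∀ pbar qbar, IsStable pbar qbar (I.run pbar qbar)) ∧
        ∀ m ∈ M', I.OSPForM m) ↔
      (∀ qbar : W → PrefList M, ∃ I : Mech M W,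
        IsStableRule qbar I.run ∧ ∀ m ∈ M', I.OSPFor m) := by
  constructor
  · rintro ⟨I, hst, hosp⟩ qbar
    refine ⟨prune qbar I, ?_, ?_⟩
    · intro pbar
      rw [prune_run qbar I pbar]
      exact hst pbar qbar
    · intro m hm
      exact prune_ospaux qbar m I Set.univ Set.univ (hosp m hm) (fun _ _ => trivial)
  · intro h
    choose F hF1 hF2 using h
    refine ⟨buildW F Finset.univ.toList (fun _ => dfl), ?_, ?_⟩
    · intro pbar qbar
      classical
      rw [buildW_run]
      have hqq : (fun w => if w ∈ (Finset.univ.toList : List W) then qbar w else dfl) = qbar := by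
        funext w
        rw [if_pos (by simp)]
      rw [hqq]
      exact hF1 qbar pbar
    · intro m hm
      exact buildW_ospaux F m (fun qb => hF2 qb m hm) _ _ _
end
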